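/- arXiv:1806.10056 — 2 statements merged into one kernel-verified Lean document; each statement's English description precedes it below -/
import Mathlib

section
/- Let f : P¹ → P¹ be a rational map of degree d > 1, k ≥ 1 an integer, λ ∈ ℂ nonzero, and q a nonzero meromorphic k-differential on P¹ with f*q = λ·q. Then the set S = { x ∈ P¹ : ord_x(q) = −k } of poles of q of maximal order k is completely invariant: f⁻¹(S) = S. -/
open Polynomial OnePoint

noncomputable section

/-- The Riemann sphere `P¹ = ℂ ∪ {∞}`. -/
abbrev P1 := OnePoint ℂ

namespace ParallelTensor

/-- Order of vanishing (negative at poles) of a nonzero rational function at a finite point. -/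
def ordC (g : RatFunc ℂ) (x : ℂ) : ℤ :=
  (g.num.rootMultiplicity x : ℤ) - (g.denom.rootMultiplicity x : ℤ)

/-- Composition `g ∘ f` of rational functions. -/
def comp (g f : RatFunc ℂ) : RatFunc ℂ :=
  Polynomial.aeval f g.num / Polynomial.aeval f g.denom

/-- Derivative of a rational function. -/
def deriv (f : RatFunc ℂ) : RatFunc ℂ :=
  algebraMap (Polynomial ℂ) (RatFunc ℂ)
      (Polynomial.derivative f.num * f.denom - f.num * Polynomial.derivative f.denom) /
    algebraMap (Polynomial ℂ) (RatFunc ℂ) (f.denom ^ 2)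

/-- The (global) degree of a rational map. -/
def degRat (f : RatFunc ℂ) : ℕ := max f.num.natDegree f.denom.natDegree

/-- Evaluation of a rational map as a self-map of the Riemann sphere. -/
def evalP1 (f : RatFunc ℂ) : P1 → P1 := fun x =>
  Option.elim x
    (if 0 < f.intDegree then (∞ : P1)
     else if f.intDegree < 0 then ((0 : ℂ) : P1)
     else ((f.num.leadingCoeff / f.denom.leadingCoeff : ℂ) : P1))
    (fun z => if f.denom.eval z = 0 then (∞ : P1)
              else ((f.num.eval z / f.denom.eval z : ℂ) : P1))

/-- Local degree of `f` at a finite point: the pole order at a pole, and the order of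
vanishing of `f - f(z)` otherwise. -/
def locDegC (f : RatFunc ℂ) (z : ℂ) : ℕ :=
  if f.denom.eval z = 0 then f.denom.rootMultiplicity z
  else (ordC (f - RatFunc.C (f.num.eval z / f.denom.eval z)) z).toNat

/-- Local degree (valency) of `f` at a point of the sphere; at `∞` it is computed in the
coordinate `w = 1/z`. -/
def locDeg (f : RatFunc ℂ) : P1 → ℕ := fun x =>
  Option.elim x (locDegC (comp f (RatFunc.X)⁻¹) 0) (locDegC f)

/-- Order of the meromorphic `k`-differential `q = g·dz^k` at a point of the sphere:
`ord_x(g)` at a finite point `x`, and at `∞` the order at `0` of `g(1/w)·(-w⁻²)^k`. -/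
def ordDiff (k : ℕ) (g : RatFunc ℂ) : P1 → ℤ := fun x =>
  Option.elim x (-g.intDegree - 2 * k) (ordC g)

/-- Pullback of the `k`-differential `q = g·dz^k` under `f`, namely `g(f(z))·f'(z)^k·dz^k`. -/
def pullback (k : ℕ) (f g : RatFunc ℂ) : RatFunc ℂ := comp g f * deriv f ^ k

/-- Ramification locus of `f`: the points of local degree at least 2. -/
def Ram (f : RatFunc ℂ) : Set P1 := {x | 2 ≤ locDeg f x}

/-- The postcritical set `⋃_{n ≥ 1} fⁿ(Ram_f)`. -/
def PostCrit (f : RatFunc ℂ) : Set P1 :=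
  ⋃ (n : ℕ) (_ : 1 ≤ n), (evalP1 f)^[n] '' Ram f

end ParallelTensor

namespace ParallelTensor




abbrev am : Polynomial ℂ →+* RatFunc ℂ := algebraMap (Polynomial ℂ) (RatFunc ℂ)

lemma am_inj : Function.Injective (am) := RatFunc.algebraMap_injective ℂ

lemma rm_one (x : ℂ) : rootMultiplicity x (1 : Polynomial ℂ) = 0 :=
  Polynomial.rootMultiplicity_eq_zero (by simp [IsRoot])

lemma ordC_zero (x : ℂ) : ordC 0 x = 0 := by simp [ordC, rm_one]

lemma cross {f : RatFunc ℂ} {p q : Polynomial ℂ} (hq : q ≠ 0)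
    (h : f = am p / am q) : f.num * q = f.denom * p := by
  have h1 : am f.num / am f.denom = am p / am q := by rw [RatFunc.num_div_denom]; exact h
  have hq' : am q ≠ 0 := by simpa using hq
  have hd' : am f.denom ≠ 0 := by simpa using f.denom_ne_zero
  rw [div_eq_div_iff hd' hq'] at h1
  apply am_inj
  push_cast [map_mul]
  linear_combination h1

lemma ordC_eq_div {p q : Polynomial ℂ} (hp : p ≠ 0) (hq : q ≠ 0) {f : RatFunc ℂ} {x : ℂ}
    (h : f = am p / am q) :
    ordC f x = (p.rootMultiplicity x : ℤ) - (q.rootMultiplicity x : ℤ) := by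
  have hf : f ≠ 0 := by
    rw [h]; apply div_ne_zero <;> simpa
  have hc := cross hq h
  have hnum : f.num ≠ 0 := RatFunc.num_ne_zero hf
  have h1 : (f.num * q).rootMultiplicity x = (f.denom * p).rootMultiplicity x := by rw [hc]
  rw [Polynomial.rootMultiplicity_mul (mul_ne_zero hnum hq),
    Polynomial.rootMultiplicity_mul (mul_ne_zero f.denom_ne_zero hp)] at h1
  unfold ordC; omega

lemma ordC_mul {a b : RatFunc ℂ} (ha : a ≠ 0) (hb : b ≠ 0) (x : ℂ) :
    ordC (a * b) x = ordC a x + ordC b x := by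
  have h : a * b = am (a.num * b.num) / am (a.denom * b.denom) := by
    conv_lhs => rw [← RatFunc.num_div_denom a, ← RatFunc.num_div_denom b]
    rw [div_mul_div_comm, ← map_mul, ← map_mul]
  rw [ordC_eq_div (mul_ne_zero (RatFunc.num_ne_zero ha) (RatFunc.num_ne_zero hb))
    (mul_ne_zero a.denom_ne_zero b.denom_ne_zero) h,
    Polynomial.rootMultiplicity_mul (mul_ne_zero (RatFunc.num_ne_zero ha) (RatFunc.num_ne_zero hb)),
    Polynomial.rootMultiplicity_mul (mul_ne_zero a.denom_ne_zero b.denom_ne_zero)]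
  unfold ordC; push_cast; ring

lemma ordC_inv (a : RatFunc ℂ) (x : ℂ) : ordC a⁻¹ x = - ordC a x := by
  rcases eq_or_ne a 0 with rfl | ha
  · simp [ordC_zero]
  have h : a⁻¹ = am a.denom / am a.num := by
    conv_lhs => rw [← RatFunc.num_div_denom a]
    rw [inv_div]
  rw [ordC_eq_div a.denom_ne_zero (RatFunc.num_ne_zero ha) h]
  unfold ordC; ring

lemma ordC_C (c : ℂ) (x : ℂ) : ordC (RatFunc.C c) x = 0 := by
  rcases eq_or_ne c 0 with rfl | hc
  · simpa using ordC_zero x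
  have h : (RatFunc.C c : RatFunc ℂ) = am (Polynomial.C c) / am 1 := by
    simp [RatFunc.algebraMap_C]
  rw [ordC_eq_div (by simpa using hc) one_ne_zero h]
  simp [rm_one, Polynomial.rootMultiplicity_eq_zero (by simp [IsRoot, hc] : ¬ IsRoot (Polynomial.C c) x)]

lemma ordC_one (x : ℂ) : ordC 1 x = 0 := by simpa using ordC_C 1 x

lemma ordC_pow {a : RatFunc ℂ} (ha : a ≠ 0) (n : ℕ) (x : ℂ) : ordC (a ^ n) x = n * ordC a x := by
  induction n with
  | zero => simpa using ordC_one x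
  | succ n ih => rw [pow_succ, ordC_mul (pow_ne_zero _ ha) ha, ih]; push_cast; ring

lemma ordC_div {a b : RatFunc ℂ} (ha : a ≠ 0) (hb : b ≠ 0) (x : ℂ) :
    ordC (a / b) x = ordC a x - ordC b x := by
  rw [div_eq_mul_inv, ordC_mul ha (inv_ne_zero hb), ordC_inv]; ring





lemma const_of_not_transcendental {f : RatFunc ℂ} (h : ¬ Transcendental ℂ f) :
    ∃ c : ℂ, f = RatFunc.C c := by
  rw [Transcendental, not_not] at h
  have hi : IsIntegral ℂ f := h.isIntegral
  have h1 : (minpoly ℂ f).degree = 1 :=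
    IsAlgClosed.degree_eq_one_of_irreducible ℂ (minpoly.irreducible hi)
  rw [minpoly.degree_eq_one_iff] at h1
  obtain ⟨c, hc⟩ := h1
  exact ⟨c, by rw [← hc]; rfl⟩

lemma transcendental_of_ne_C {f : RatFunc ℂ} (h : ∀ c : ℂ, f ≠ RatFunc.C c) :
    Transcendental ℂ f := by
  by_contra hc
  obtain ⟨c, rfl⟩ := const_of_not_transcendental hc
  exact h c rfl

lemma aeval_ne_zero {f : RatFunc ℂ} (hf : Transcendental ℂ f) {p : Polynomial ℂ} (hp : p ≠ 0) :
    aeval f p ≠ 0 := fun h => hp <| by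
  have := transcendental_iff_injective.mp hf
  exact this (by simpa using h)

/-- key representation lemma for comp -/
lemma comp_eq_div {g f : RatFunc ℂ} (hf : Transcendental ℂ f) {p q : Polynomial ℂ}
    (hq : q ≠ 0) (h : g = am p / am q) :
    comp g f = aeval f p / aeval f q := by
  have hc : g.num * q = g.denom * p := by
    have h1 : am g.num / am g.denom = am p / am q := by rw [RatFunc.num_div_denom]; exact h
    have hq' : am q ≠ 0 := by simpa using hq
    have hd' : am g.denom ≠ 0 := by simpa using g.denom_ne_zero
    rw [div_eq_div_iff hd' hq'] at h1
    apply RatFunc.algebraMap_injective ℂ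
    push_cast [map_mul]
    linear_combination h1
  have := congrArg (aeval f) hc
  rw [map_mul, map_mul] at this
  rw [comp, div_eq_div_iff (aeval_ne_zero hf g.denom_ne_zero) (aeval_ne_zero hf hq)]
  linear_combination this

lemma comp_mul {a b f : RatFunc ℂ} (hf : Transcendental ℂ f) :
    comp (a * b) f = comp a f * comp b f := by
  have h : a * b = am (a.num * b.num) / am (a.denom * b.denom) := by
    conv_lhs => rw [← RatFunc.num_div_denom a, ← RatFunc.num_div_denom b]
    rw [div_mul_div_comm, ← map_mul, ← map_mul]
  rw [comp_eq_div hf (mul_ne_zero a.denom_ne_zero b.denom_ne_zero) h, map_mul, map_mul,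
    comp, comp, div_mul_div_comm]

lemma comp_add {a b f : RatFunc ℂ} (hf : Transcendental ℂ f) :
    comp (a + b) f = comp a f + comp b f := by
  have h : a + b = am (a.num * b.denom + b.num * a.denom) / am (a.denom * b.denom) := by
    conv_lhs => rw [← RatFunc.num_div_denom a, ← RatFunc.num_div_denom b]
    rw [div_add_div _ _ (by simpa using a.denom_ne_zero) (by simpa using b.denom_ne_zero)]
    push_cast [map_mul, map_add]
    ring_nf
  rw [comp_eq_div hf (mul_ne_zero a.denom_ne_zero b.denom_ne_zero) h]
  have h1 : aeval f (a.denom) ≠ 0 := aeval_ne_zero hf a.denom_ne_zero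
  have h2 : aeval f (b.denom) ≠ 0 := aeval_ne_zero hf b.denom_ne_zero
  rw [comp, comp, div_add_div _ _ h1 h2, map_add, map_mul, map_mul, map_mul]
  ring_nf

lemma comp_algebraMap {f : RatFunc ℂ} (hf : Transcendental ℂ f) (p : Polynomial ℂ) :
    comp (am p) f = aeval f p := by
  rw [comp_eq_div (p := p) (q := 1) hf one_ne_zero (by rw [map_one, div_one]), map_one, div_one]

lemma comp_C {f : RatFunc ℂ} (hf : Transcendental ℂ f) (c : ℂ) :
    comp (RatFunc.C c) f = RatFunc.C c := by
  have := comp_algebraMap hf (Polynomial.C c)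
  rw [RatFunc.algebraMap_C] at this
  rw [this, aeval_C]
  rfl

lemma comp_X {f : RatFunc ℂ} (hf : Transcendental ℂ f) :
    comp RatFunc.X f = f := by
  have := comp_algebraMap hf Polynomial.X
  rw [RatFunc.algebraMap_X] at this
  rw [this, aeval_X]

lemma comp_inv {a f : RatFunc ℂ} (hf : Transcendental ℂ f) :
    comp a⁻¹ f = (comp a f)⁻¹ := by
  rcases eq_or_ne a 0 with rfl | ha
  · simp [comp]
  have h : a⁻¹ = am a.denom / am a.num := by
    conv_lhs => rw [← RatFunc.num_div_denom a]; rw [inv_div]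
  rw [comp_eq_div hf (RatFunc.num_ne_zero ha) h, comp, inv_div]

lemma comp_ne_zero {a f : RatFunc ℂ} (hf : Transcendental ℂ f) (ha : a ≠ 0) :
    comp a f ≠ 0 :=
  div_ne_zero (aeval_ne_zero hf (RatFunc.num_ne_zero ha)) (aeval_ne_zero hf a.denom_ne_zero)






/-- Well-definedness of `deriv` over arbitrary representations. -/
lemma deriv_eq_div {f : RatFunc ℂ} {p q : Polynomial ℂ} (hq : q ≠ 0)
    (h : f = am p / am q) :
    deriv f = am (Polynomial.derivative p * q - p * Polynomial.derivative q) / am (q ^ 2) := by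
  have hc : f.num * q = f.denom * p := cross hq h
  have hc' := congrArg Polynomial.derivative hc
  rw [Polynomial.derivative_mul, Polynomial.derivative_mul] at hc'
  rw [deriv, div_eq_div_iff (by simpa using pow_ne_zero 2 f.denom_ne_zero)
    (by simpa using pow_ne_zero 2 hq), ← map_mul, ← map_mul]
  refine congrArg am ?_
  have e1 : Polynomial.derivative f.num * q + f.num * Polynomial.derivative q
      = Polynomial.derivative f.denom * p + f.denom * Polynomial.derivative p := hc'
  linear_combination (f.denom * q) * e1 - (Polynomial.derivative f.denom * q + f.denom * Polynomial.derivative q) * hc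


lemma deriv_algebraMap (p : Polynomial ℂ) : deriv (am p) = am (Polynomial.derivative p) := by
  rw [deriv_eq_div (p := p) (q := 1) one_ne_zero (by rw [map_one, div_one])]
  simp

lemma deriv_C (c : ℂ) : deriv (RatFunc.C c) = 0 := by
  have := deriv_algebraMap (Polynomial.C c)
  rw [RatFunc.algebraMap_C] at this
  simpa using this

lemma deriv_one : deriv (1 : RatFunc ℂ) = 0 := by simpa using deriv_C 1

lemma deriv_add (a b : RatFunc ℂ) : deriv (a + b) = deriv a + deriv b := by
  have h : a + b = am (a.num * b.denom + b.num * a.denom) / am (a.denom * b.denom) := by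
    conv_lhs => rw [← RatFunc.num_div_denom a, ← RatFunc.num_div_denom b]
    rw [div_add_div _ _ (by simpa using a.denom_ne_zero) (by simpa using b.denom_ne_zero)]
    push_cast [map_mul, map_add]
    ring_nf
  rw [deriv_eq_div (mul_ne_zero a.denom_ne_zero b.denom_ne_zero) h,
    deriv_eq_div a.denom_ne_zero (RatFunc.num_div_denom a).symm,
    deriv_eq_div b.denom_ne_zero (RatFunc.num_div_denom b).symm]
  have ha : am (a.denom) ≠ 0 := by simpa using a.denom_ne_zero
  have hb : am (b.denom) ≠ 0 := by simpa using b.denom_ne_zero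
  field_simp
  simp only [Polynomial.derivative_mul, Polynomial.derivative_add, map_mul, map_add, map_sub,
    map_neg, map_pow]
  ring

lemma deriv_mul (a b : RatFunc ℂ) : deriv (a * b) = deriv a * b + a * deriv b := by
  have h : a * b = am (a.num * b.num) / am (a.denom * b.denom) := by
    conv_lhs => rw [← RatFunc.num_div_denom a, ← RatFunc.num_div_denom b]
    rw [div_mul_div_comm, ← map_mul, ← map_mul]
  rw [deriv_eq_div (mul_ne_zero a.denom_ne_zero b.denom_ne_zero) h,
    deriv_eq_div a.denom_ne_zero (RatFunc.num_div_denom a).symm,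
    deriv_eq_div b.denom_ne_zero (RatFunc.num_div_denom b).symm]
  set p := a.num with hp
  set q := a.denom with hq
  set r := b.num with hr
  set s := b.denom with hs
  have ha : a = am p / am q := (RatFunc.num_div_denom a).symm
  have hb : b = am r / am s := (RatFunc.num_div_denom b).symm
  rw [ha, hb]
  have hq' : am q ≠ 0 := by simpa [hq] using a.denom_ne_zero
  have hs' : am s ≠ 0 := by simpa [hs] using b.denom_ne_zero
  field_simp
  simp only [Polynomial.derivative_mul, Polynomial.derivative_add, map_mul, map_add, map_sub,
    map_neg, map_pow]
  ring

lemma deriv_inv (a : RatFunc ℂ) : deriv a⁻¹ = - deriv a / a ^ 2 := by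
  rcases eq_or_ne a 0 with rfl | ha
  · simp [deriv]
  have h2 : deriv a * a⁻¹ + a * deriv a⁻¹ = 0 := by
    rw [← deriv_mul, mul_inv_cancel₀ ha, deriv_one]
  rw [eq_div_iff (pow_ne_zero 2 ha)]
  have h3 : deriv a * (a * a⁻¹) + a ^ 2 * deriv a⁻¹ = 0 := by linear_combination a * h2
  rw [mul_inv_cancel₀ ha, mul_one] at h3
  linear_combination h3

lemma deriv_pow' (a : RatFunc ℂ) (n : ℕ) :
    deriv (a ^ (n + 1)) = (n + 1 : ℕ) * a ^ n * deriv a := by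
  induction n with
  | zero => simp
  | succ n ih =>
    rw [pow_succ, deriv_mul, ih]
    push_cast
    ring

lemma deriv_div (u v : RatFunc ℂ) (hv : v ≠ 0) :
    deriv (u / v) = (deriv u * v - u * deriv v) / v ^ 2 := by
  rw [div_eq_mul_inv, deriv_mul, deriv_inv]
  field_simp
  ring

lemma comp_one {f : RatFunc ℂ} (hf : Transcendental ℂ f) : comp 1 f = 1 := by
  simpa using comp_C hf 1

lemma comp_pow {a f : RatFunc ℂ} (hf : Transcendental ℂ f) (n : ℕ) :
    comp (a ^ n) f = comp a f ^ n := by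
  induction n with
  | zero => simpa using comp_one hf
  | succ n ih => rw [pow_succ, comp_mul hf, ih, pow_succ]

lemma deriv_aeval {f : RatFunc ℂ} (p : Polynomial ℂ) :
    deriv (aeval f p) = aeval f (Polynomial.derivative p) * deriv f := by
  induction p using Polynomial.induction_on with
  | C c =>
    rw [aeval_C, Polynomial.derivative_C, map_zero, zero_mul]
    exact deriv_C c
  | add p q hp hq =>
    rw [map_add, deriv_add, hp, hq, Polynomial.derivative_add, map_add]; ring
  | monomial n a ih =>
    have h1 : (Polynomial.C a * Polynomial.X ^ (n + 1) : Polynomial ℂ)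
        = (Polynomial.C a * Polynomial.X ^ n) * Polynomial.X := by ring
    rw [h1, map_mul, deriv_mul, ih, aeval_X]
    conv_rhs => rw [Polynomial.derivative_mul, Polynomial.derivative_X, mul_one, map_add,
      map_mul, aeval_X]
    ring

lemma deriv_comp {g f : RatFunc ℂ} (hf : Transcendental ℂ f) :
    deriv (comp g f) = comp (deriv g) f * deriv f := by
  have hv : aeval f g.denom ≠ 0 := aeval_ne_zero hf g.denom_ne_zero
  have hu : comp g f = aeval f g.num / aeval f g.denom := rfl
  have hd : deriv g = am (Polynomial.derivative g.num * g.denom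
      - g.num * Polynomial.derivative g.denom) / am (g.denom ^ 2) := rfl
  rw [div_eq_mul_inv] at hd
  rw [hu, deriv_div _ _ hv, deriv_aeval, deriv_aeval, hd, comp_mul hf,
    comp_inv hf, comp_algebraMap hf, comp_algebraMap hf, map_sub, map_mul, map_mul, map_pow]
  field_simp

lemma comp_aeval {h f : RatFunc ℂ} (hf : Transcendental ℂ f) (p : Polynomial ℂ) :
    comp (aeval h p) f = aeval (comp h f) p := by
  induction p using Polynomial.induction_on with
  | C c =>
    rw [aeval_C, aeval_C]
    exact comp_C hf c
  | add p q hp hq => rw [map_add, comp_add hf, hp, hq, map_add]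
  | monomial n a ih =>
    have h1 : (Polynomial.C a * Polynomial.X ^ (n + 1) : Polynomial ℂ)
        = (Polynomial.C a * Polynomial.X ^ n) * Polynomial.X := by ring
    rw [h1, show (aeval h) (Polynomial.C a * Polynomial.X ^ n * Polynomial.X)
        = (aeval h) (Polynomial.C a * Polynomial.X ^ n) * h by rw [map_mul, aeval_X],
      comp_mul hf, ih,
      show (aeval (comp h f)) (Polynomial.C a * Polynomial.X ^ n * Polynomial.X)
        = (aeval (comp h f)) (Polynomial.C a * Polynomial.X ^ n) * (comp h f)
        by rw [map_mul, aeval_X]]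

lemma comp_comp {g h f : RatFunc ℂ} (hf : Transcendental ℂ f) :
    comp (comp g h) f = comp g (comp h f) := by
  have h1 : comp g h = aeval h g.num / aeval h g.denom := rfl
  have h2 : comp g (comp h f) = aeval (comp h f) g.num / aeval (comp h f) g.denom := rfl
  rw [h1, h2, div_eq_mul_inv, comp_mul hf, comp_inv hf, comp_aeval hf, comp_aeval hf,
    div_eq_mul_inv]


lemma pullback_comp (k : ℕ) {f h : RatFunc ℂ} (g : RatFunc ℂ)
    (hf : Transcendental ℂ f) :
    pullback k f (pullback k h g) = pullback k (comp h f) g := by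
  unfold pullback
  rw [comp_mul hf, comp_pow hf, comp_comp hf, deriv_comp hf, mul_pow]
  ring

lemma transcendental_ne_C {f : RatFunc ℂ} (hf : Transcendental ℂ f) (c : ℂ) :
    f ≠ RatFunc.C c := by
  intro h
  exact hf (h ▸ (isAlgebraic_algebraMap c : IsAlgebraic ℂ (algebraMap ℂ (RatFunc ℂ) c)))

lemma rm_denom_zero {f : RatFunc ℂ} {x : ℂ} (h : f.denom.eval x ≠ 0) :
    f.denom.rootMultiplicity x = 0 :=
  Polynomial.rootMultiplicity_eq_zero h

/-- order of `f - C r` at a finite non-pole `x`. -/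
lemma ordC_sub_C {f : RatFunc ℂ} (hf : Transcendental ℂ f) {x : ℂ}
    (hden : f.denom.eval x ≠ 0) (r : ℂ) :
    ordC (f - RatFunc.C r) x = (f.num - Polynomial.C r * f.denom).rootMultiplicity x := by
  have hN : f.num - Polynomial.C r * f.denom ≠ 0 := by
    intro h0
    apply transcendental_ne_C hf r
    have : am f.num = RatFunc.C r * am f.denom := by
      have := congrArg am (sub_eq_zero.mp h0)
      rw [map_mul] at this
      rw [this, RatFunc.algebraMap_C]
    rw [← RatFunc.num_div_denom f, this, mul_div_assoc, div_self (by simpa using f.denom_ne_zero),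
      mul_one]
  have hrep : f - RatFunc.C r = am (f.num - Polynomial.C r * f.denom) / am f.denom := by
    rw [map_sub, map_mul, sub_div, mul_div_assoc, div_self (by simpa using f.denom_ne_zero),
      mul_one, RatFunc.num_div_denom, RatFunc.algebraMap_C]
  rw [ordC_eq_div hN f.denom_ne_zero hrep, rm_denom_zero hden]
  simp

lemma ordC_multiset_prod (s : Multiset (RatFunc ℂ)) (hs : ∀ a ∈ s, a ≠ 0) (x : ℂ) :
    ordC s.prod x = (s.map (fun a => ordC a x)).sum := by
  induction s using Multiset.induction with
  | empty => simpa using ordC_one x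
  | cons a t ih =>
    have ha : a ≠ 0 := hs a (Multiset.mem_cons_self a t)
    have ht : t.prod ≠ 0 :=
      Multiset.prod_ne_zero (fun h => hs 0 (Multiset.mem_cons_of_mem h) rfl)
    rw [Multiset.prod_cons, ordC_mul ha ht, Multiset.map_cons, Multiset.sum_cons,
      ih (fun b hb => hs b (Multiset.mem_cons_of_mem hb))]

lemma sum_ite_count (s : Multiset ℂ) (y : ℂ) (e : ℤ) :
    (s.map (fun r => if r = y then e else 0)).sum = s.count y * e := by
  induction s using Multiset.induction with
  | empty => simp
  | cons a t ih =>
    rw [Multiset.map_cons, Multiset.sum_cons, ih, Multiset.count_cons]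
    rcases eq_or_ne a y with rfl | h
    · simp; push_cast; ring
    · simp [h, Ne.symm h]

/-- Order at `x` of `g∘f` when `f(x) = y` finite. -/
lemma ordC_aeval {f : RatFunc ℂ} (hf : Transcendental ℂ f) {x y : ℂ}
    (hden : f.denom.eval x ≠ 0) (hy : f.num.eval x = y * f.denom.eval x)
    {p : Polynomial ℂ} (hp : p ≠ 0) :
    ordC (aeval f p) x
      = (p.rootMultiplicity y : ℤ) * (f.num - Polynomial.C y * f.denom).rootMultiplicity x := by
  classical
  set e : ℤ := ((f.num - Polynomial.C y * f.denom).rootMultiplicity x : ℤ) with he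
  -- factor p into linear factors
  have hsplit : p = Polynomial.C p.leadingCoeff * (p.roots.map fun a => X - Polynomial.C a).prod :=
    (IsAlgClosed.splits p).eq_prod_roots
  have key : ∀ r : ℂ, ordC (f - RatFunc.C r) x = if r = y then e else 0 := by
    intro r
    rw [ordC_sub_C hf hden r]
    by_cases h : r = y
    · rw [h, if_pos rfl, he]
    · rw [if_neg h]
      have : (f.num - Polynomial.C r * f.denom).eval x ≠ 0 := by
        simp only [Polynomial.eval_sub, Polynomial.eval_mul, Polynomial.eval_C, hy]
        intro hc
        apply h
        have hd : f.denom.eval x ≠ 0 := hden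
        have h2 : (y - r) * f.denom.eval x = 0 := by linear_combination hc
        rcases mul_eq_zero.mp h2 with h1 | h1
        · exact (sub_eq_zero.mp h1).symm
        · exact absurd h1 hd
      rw [Polynomial.rootMultiplicity_eq_zero this]
      norm_num
  conv_lhs => rw [hsplit]
  rw [map_mul, map_multiset_prod]
  have hlc : p.leadingCoeff ≠ 0 := Polynomial.leadingCoeff_ne_zero.mpr hp
  have h1 : aeval f (Polynomial.C p.leadingCoeff) = RatFunc.C p.leadingCoeff := by
    rw [aeval_C]; rfl
  have hprod : (Multiset.map (⇑(aeval f)) (p.roots.map fun a => X - Polynomial.C a)).prod ≠ 0 := by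
    apply Multiset.prod_ne_zero
    intro hmem
    rw [Multiset.mem_map] at hmem
    obtain ⟨q, hq, hq0⟩ := hmem
    rw [Multiset.mem_map] at hq
    obtain ⟨r, _, rfl⟩ := hq
    have heval : aeval f (X - Polynomial.C r) = f - RatFunc.C r := by
      rw [map_sub, aeval_X, aeval_C]; rfl
    rw [heval] at hq0
    exact sub_ne_zero.mpr (transcendental_ne_C hf r) hq0
  have hC0 : (aeval f) (Polynomial.C p.leadingCoeff) ≠ 0 :=
    aeval_ne_zero hf (by simpa using hlc)
  rw [ordC_mul hC0 hprod, h1, ordC_C]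
  rw [ordC_multiset_prod _ (fun a ha => by
      rw [Multiset.mem_map] at ha
      obtain ⟨q, hq, rfl⟩ := ha
      rw [Multiset.mem_map] at hq
      obtain ⟨r, _, rfl⟩ := hq
      rw [map_sub, aeval_X, aeval_C, show (algebraMap ℂ (RatFunc ℂ)) r = RatFunc.C r from rfl]
      exact sub_ne_zero.mpr (transcendental_ne_C hf r)) x]
  rw [Multiset.map_map, Multiset.map_map]
  have : (fun r => ordC ((aeval f) (X - Polynomial.C r)) x) = fun r => if r = y then e else 0 := by
    funext r
    rw [map_sub, aeval_X, aeval_C, show (algebraMap ℂ (RatFunc ℂ)) r = RatFunc.C r from rfl, key r]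
  simp only [Function.comp_def]
  rw [show (fun r => ordC ((aeval f) (X - Polynomial.C r)) x) = fun r => if r = y then e else 0 from this]
  rw [sum_ite_count, Polynomial.count_roots]
  ring

lemma sub_C_num_ne_zero {f : RatFunc ℂ} (hf : Transcendental ℂ f) (r : ℂ) :
    f.num - Polynomial.C r * f.denom ≠ 0 := by
  intro h0
  apply transcendental_ne_C hf r
  have h : am f.num = RatFunc.C r * am f.denom := by
    have := congrArg am (sub_eq_zero.mp h0)
    rw [map_mul] at this
    rw [this, RatFunc.algebraMap_C]
  rw [← RatFunc.num_div_denom f, h, mul_div_assoc, div_self (by simpa using f.denom_ne_zero),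
    mul_one]

lemma sub_C_rep {f : RatFunc ℂ} (r : ℂ) :
    f - RatFunc.C r = am (f.num - Polynomial.C r * f.denom) / am f.denom := by
  rw [map_sub, map_mul, sub_div, mul_div_assoc, div_self (by simpa using f.denom_ne_zero),
    mul_one, RatFunc.num_div_denom, RatFunc.algebraMap_C]

lemma deriv_sub_C (f : RatFunc ℂ) (c : ℂ) : deriv (f - RatFunc.C c) = deriv f := by
  conv_rhs => rw [show f = (f - RatFunc.C c) + RatFunc.C c by ring]
  rw [deriv_add, deriv_C, add_zero]

lemma ordC_deriv {f : RatFunc ℂ} (hf : Transcendental ℂ f) {x y : ℂ}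
    (hden : f.denom.eval x ≠ 0) (hy : f.num.eval x = y * f.denom.eval x) :
    deriv f ≠ 0 ∧
      ordC (deriv f) x = ((f.num - Polynomial.C y * f.denom).rootMultiplicity x : ℤ) - 1 := by
  classical
  set N := f.num - Polynomial.C y * f.denom with hN_def
  have hN : N ≠ 0 := sub_C_num_ne_zero hf y
  have hNx : N.eval x = 0 := by
    simp only [hN_def, Polynomial.eval_sub, Polynomial.eval_mul, Polynomial.eval_C, hy]
    ring
  set e := N.rootMultiplicity x with he_def
  have he1 : 1 ≤ e := (Polynomial.rootMultiplicity_pos hN).mpr hNx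
  set m := e - 1 with hm_def
  have hem : e = m + 1 := (Nat.succ_pred_eq_of_pos he1).symm
  obtain ⟨u, hu_eq, hu_ndvd⟩ := N.exists_eq_pow_rootMultiplicity_mul_and_not_dvd hN x
  have hux : u.eval x ≠ 0 := fun h => hu_ndvd (Polynomial.dvd_iff_isRoot.mpr h)
  rw [← he_def, hem] at hu_eq
  set D := f.denom with hD_def
  set M := (Polynomial.C ((m : ℂ) + 1) * u + (Polynomial.X - Polynomial.C x) * Polynomial.derivative u) * D
      - (Polynomial.X - Polynomial.C x) * u * Polynomial.derivative D with hM_def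
  have hP : Polynomial.derivative N * D - N * Polynomial.derivative D
      = (Polynomial.X - Polynomial.C x) ^ m * M := by
    rw [hu_eq, hM_def]
    rw [Polynomial.derivative_mul, Polynomial.derivative_pow, Polynomial.derivative_X_sub_C]
    push_cast
    ring_nf
  have hMx : M.eval x ≠ 0 := by
    simp only [hM_def, Polynomial.eval_sub, Polynomial.eval_add, Polynomial.eval_mul,
      Polynomial.eval_C, Polynomial.eval_X, sub_self, zero_mul, mul_zero, add_zero, sub_zero]
    intro hc
    rcases mul_eq_zero.mp hc with h1 | h1
    · rcases mul_eq_zero.mp h1 with h2 | h2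
      · exact Nat.cast_add_one_ne_zero m h2
      · exact hux h2
    · exact hden h1
  have hM : M ≠ 0 := fun h => hMx (by rw [h]; simp)
  have hP0 : Polynomial.derivative N * D - N * Polynomial.derivative D ≠ 0 := by
    rw [hP]
    exact mul_ne_zero (pow_ne_zero _ (Polynomial.X_sub_C_ne_zero x)) hM
  have hrep : deriv f = am (Polynomial.derivative N * D - N * Polynomial.derivative D) / am (D ^ 2) := by
    rw [← deriv_sub_C f y, deriv_eq_div f.denom_ne_zero (sub_C_rep y)]
  have hdf : deriv f ≠ 0 := by
    rw [hrep]
    refine div_ne_zero (fun h => hP0 (am_inj (by rw [h, map_zero]))) ?_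
    simpa using pow_ne_zero 2 f.denom_ne_zero
  refine ⟨hdf, ?_⟩
  rw [ordC_eq_div hP0 (pow_ne_zero 2 f.denom_ne_zero) hrep]
  have h1 : (D ^ 2).rootMultiplicity x = 0 :=
    Polynomial.rootMultiplicity_eq_zero (by simp [Polynomial.IsRoot, hden])
  have h2 : (Polynomial.derivative N * D - N * Polynomial.derivative D).rootMultiplicity x = m := by
    rw [hP, Polynomial.rootMultiplicity_mul (mul_ne_zero (pow_ne_zero _ (Polynomial.X_sub_C_ne_zero x)) hM),
      Polynomial.rootMultiplicity_X_sub_C_pow, Polynomial.rootMultiplicity_eq_zero hMx, add_zero]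
  rw [h1, h2, hem]
  push_cast
  ring

/-- The core local computation at a finite point with finite image. -/
lemma core {f g : RatFunc ℂ} (hf : Transcendental ℂ f) (hg : g ≠ 0) (k : ℕ) {x y : ℂ}
    (hden : f.denom.eval x ≠ 0) (hy : f.num.eval x = y * f.denom.eval x) :
    ∃ e : ℕ, 1 ≤ e ∧
      ordC (pullback k f g) x = e * (ordC g y + k) - k := by
  set N := f.num - Polynomial.C y * f.denom with hN_def
  have hN : N ≠ 0 := sub_C_num_ne_zero hf y
  have hNx : N.eval x = 0 := by
    simp only [hN_def, Polynomial.eval_sub, Polynomial.eval_mul, Polynomial.eval_C, hy]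
    ring
  set e := N.rootMultiplicity x with he_def
  have he1 : 1 ≤ e := (Polynomial.rootMultiplicity_pos hN).mpr hNx
  refine ⟨e, he1, ?_⟩
  obtain ⟨hdf, hder⟩ := ordC_deriv hf hden hy
  have hcomp : ordC (comp g f) x = ordC g y * e := by
    have hnum : ordC (aeval f g.num) x = (g.num.rootMultiplicity y : ℤ) * e :=
      ordC_aeval hf hden hy (RatFunc.num_ne_zero hg)
    have hden2 : ordC (aeval f g.denom) x = (g.denom.rootMultiplicity y : ℤ) * e :=
      ordC_aeval hf hden hy g.denom_ne_zero
    rw [show comp g f = aeval f g.num / aeval f g.denom from rfl,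
      ordC_div (aeval_ne_zero hf (RatFunc.num_ne_zero hg)) (aeval_ne_zero hf g.denom_ne_zero),
      hnum, hden2, ordC]
    ring
  rw [pullback, ordC_mul (comp_ne_zero hf hg) (pow_ne_zero _ hdf), ordC_pow hdf, hcomp, hder]
  push_cast
  ring

/-! ### The involution σ = 1/z and orders at infinity -/

lemma X_ne_zero' : (RatFunc.X : RatFunc ℂ) ≠ 0 := RatFunc.X_ne_zero

lemma sigma_trans : Transcendental ℂ (RatFunc.X : RatFunc ℂ)⁻¹ := by
  apply transcendental_of_ne_C
  intro c h
  have h1 : (1 : RatFunc ℂ) = RatFunc.X * RatFunc.C c := by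
    rw [← h, mul_inv_cancel₀ X_ne_zero']
  have h2 : (1 : Polynomial ℂ) = Polynomial.X * Polynomial.C c := by
    apply am_inj
    rw [map_one, map_mul, RatFunc.algebraMap_C, RatFunc.algebraMap_X]
    exact h1
  have := congrArg (Polynomial.eval 0) h2
  simp at this

lemma transcendental_inv {f : RatFunc ℂ} (hf : Transcendental ℂ f) :
    Transcendental ℂ f⁻¹ := by
  apply transcendental_of_ne_C
  intro c h
  have hf0 : f ≠ 0 := fun h0 => transcendental_ne_C hf 0 (by rw [h0]; simp)
  have hc : c ≠ 0 := by
    intro h0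
    rw [h0] at h
    simp only [map_zero] at h
    exact hf0 (by rwa [inv_eq_zero] at h)
  apply transcendental_ne_C hf c⁻¹
  have h1 : f * RatFunc.C c = 1 := by rw [← h, mul_inv_cancel₀ hf0]
  calc f = f * (RatFunc.C c * RatFunc.C c⁻¹) := by
        rw [← map_mul, mul_inv_cancel₀ hc, map_one, mul_one]
    _ = (f * RatFunc.C c) * RatFunc.C c⁻¹ := by ring
    _ = RatFunc.C c⁻¹ := by rw [h1, one_mul]

lemma comp_X_right {f : RatFunc ℂ} : comp f RatFunc.X = f := by
  have haev : ∀ p : Polynomial ℂ, aeval (RatFunc.X : RatFunc ℂ) p = am p := by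
    intro p
    rw [← RatFunc.algebraMap_X, Polynomial.aeval_algebraMap_apply]
    simp
  rw [comp, haev, haev, RatFunc.num_div_denom]

lemma comp_sigma_sigma : comp (RatFunc.X : RatFunc ℂ)⁻¹ (RatFunc.X)⁻¹ = RatFunc.X := by
  rw [comp_inv sigma_trans, comp_X sigma_trans, inv_inv]

lemma comp_comp_sigma (f : RatFunc ℂ) :
    comp (comp f (RatFunc.X)⁻¹) (RatFunc.X)⁻¹ = f := by
  rw [comp_comp sigma_trans, comp_sigma_sigma, comp_X_right]

lemma transcendental_comp_sigma {f : RatFunc ℂ} (hf : Transcendental ℂ f) :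
    Transcendental ℂ (comp f (RatFunc.X)⁻¹) := by
  apply transcendental_of_ne_C
  intro c h
  apply transcendental_ne_C hf c
  rw [← comp_comp_sigma f, h, comp_C sigma_trans]

lemma deriv_X : deriv (RatFunc.X : RatFunc ℂ) = 1 := by
  rw [← RatFunc.algebraMap_X, deriv_algebraMap]
  simp

lemma deriv_sigma : deriv (RatFunc.X : RatFunc ℂ)⁻¹ = -1 / RatFunc.X ^ 2 := by
  rw [deriv_inv, deriv_X]

lemma ordC_X_zero : ordC (RatFunc.X : RatFunc ℂ) 0 = 1 := by
  have h : (RatFunc.X : RatFunc ℂ) = am Polynomial.X / am 1 := by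
    rw [map_one, div_one, RatFunc.algebraMap_X]
  rw [ordC_eq_div Polynomial.X_ne_zero one_ne_zero h, rm_one]
  have : (Polynomial.X : Polynomial ℂ) = Polynomial.X - Polynomial.C 0 := by simp
  rw [this, Polynomial.rootMultiplicity_X_sub_C_self]
  simp

lemma ordC_deriv_sigma_zero : ordC (deriv (RatFunc.X : RatFunc ℂ)⁻¹) 0 = -2 := by
  rw [deriv_sigma, ordC_div (by norm_num) (pow_ne_zero 2 X_ne_zero'),
    ordC_pow X_ne_zero', ordC_X_zero]
  have : (-1 : RatFunc ℂ) = RatFunc.C (-1) := by rw [map_neg, map_one]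
  rw [this, ordC_C]
  norm_num

lemma deriv_sigma_ne_zero : deriv (RatFunc.X : RatFunc ℂ)⁻¹ ≠ 0 := by
  rw [deriv_sigma]
  exact div_ne_zero (by norm_num) (pow_ne_zero 2 X_ne_zero')

lemma sigma_sub_C_rep (r : ℂ) :
    (RatFunc.X : RatFunc ℂ)⁻¹ - RatFunc.C r
      = am (1 - Polynomial.C r * Polynomial.X) / am Polynomial.X := by
  rw [eq_div_iff (by rw [RatFunc.algebraMap_X]; exact X_ne_zero'), map_sub, map_one, map_mul,
    RatFunc.algebraMap_C, RatFunc.algebraMap_X, sub_mul, inv_mul_cancel₀ X_ne_zero']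

lemma one_sub_C_mul_X_ne_zero (r : ℂ) : (1 - Polynomial.C r * Polynomial.X : Polynomial ℂ) ≠ 0 := by
  intro h
  have := congrArg (Polynomial.eval 0) h
  simp at this

lemma ordC_sigma_sub_C (r : ℂ) : ordC ((RatFunc.X : RatFunc ℂ)⁻¹ - RatFunc.C r) 0 = -1 := by
  rw [ordC_eq_div (one_sub_C_mul_X_ne_zero r) Polynomial.X_ne_zero (sigma_sub_C_rep r)]
  have h1 : (1 - Polynomial.C r * Polynomial.X : Polynomial ℂ).rootMultiplicity 0 = 0 :=
    Polynomial.rootMultiplicity_eq_zero (by simp [Polynomial.IsRoot])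
  have h2 : (Polynomial.X : Polynomial ℂ).rootMultiplicity 0 = 1 := by
    rw [show (Polynomial.X : Polynomial ℂ) = Polynomial.X - Polynomial.C 0 by simp,
      Polynomial.rootMultiplicity_X_sub_C_self]
  rw [h1, h2]
  norm_num

lemma sum_neg_one (s : Multiset ℂ) :
    (s.map (fun _ => (-1 : ℤ))).sum = -(Multiset.card s) := by
  induction s using Multiset.induction with
  | empty => simp
  | cons a t ih =>
    rw [Multiset.map_cons, Multiset.sum_cons, ih, Multiset.card_cons]
    push_cast
    ring

lemma ordC_aeval_sigma {p : Polynomial ℂ} (hp : p ≠ 0) :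
    ordC (aeval (RatFunc.X : RatFunc ℂ)⁻¹ p) 0 = -(p.natDegree : ℤ) := by
  classical
  have hsplit : p = Polynomial.C p.leadingCoeff * (p.roots.map fun a => X - Polynomial.C a).prod :=
    (IsAlgClosed.splits p).eq_prod_roots
  have hlc : p.leadingCoeff ≠ 0 := Polynomial.leadingCoeff_ne_zero.mpr hp
  have hC0 : (aeval (RatFunc.X : RatFunc ℂ)⁻¹) (Polynomial.C p.leadingCoeff) ≠ 0 :=
    aeval_ne_zero sigma_trans (by simpa using hlc)
  have h1 : aeval (RatFunc.X : RatFunc ℂ)⁻¹ (Polynomial.C p.leadingCoeff)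
      = RatFunc.C p.leadingCoeff := by rw [aeval_C]; rfl
  have hterm : ∀ r : ℂ, aeval (RatFunc.X : RatFunc ℂ)⁻¹ (X - Polynomial.C r)
      = (RatFunc.X : RatFunc ℂ)⁻¹ - RatFunc.C r := by
    intro r; rw [map_sub, aeval_X, aeval_C]; rfl
  have hprod : (Multiset.map (⇑(aeval (RatFunc.X : RatFunc ℂ)⁻¹))
      (p.roots.map fun a => X - Polynomial.C a)).prod ≠ 0 := by
    apply Multiset.prod_ne_zero
    intro hmem
    rw [Multiset.mem_map] at hmem
    obtain ⟨q, hq, hq0⟩ := hmem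
    rw [Multiset.mem_map] at hq
    obtain ⟨r, _, rfl⟩ := hq
    rw [hterm] at hq0
    exact sub_ne_zero.mpr (transcendental_ne_C sigma_trans r) hq0
  conv_lhs => rw [hsplit]
  rw [map_mul, map_multiset_prod, ordC_mul hC0 hprod, h1, ordC_C,
    ordC_multiset_prod _ (fun a ha => by
      rw [Multiset.mem_map] at ha
      obtain ⟨q, hq, rfl⟩ := ha
      rw [Multiset.mem_map] at hq
      obtain ⟨r, _, rfl⟩ := hq
      rw [hterm]
      exact sub_ne_zero.mpr (transcendental_ne_C sigma_trans r)) 0,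
    Multiset.map_map, Multiset.map_map]
  simp only [Function.comp_def]
  rw [show (fun r => ordC ((aeval (RatFunc.X : RatFunc ℂ)⁻¹) (X - Polynomial.C r)) 0)
      = fun _ : ℂ => (-1 : ℤ) from funext (fun r => by rw [hterm, ordC_sigma_sub_C]),
    sum_neg_one]
  have hcard : Multiset.card p.roots = p.natDegree := by
    have := (IsAlgClosed.splits p).natDegree_eq_card_roots
    exact this.symm
  rw [hcard]
  ring

lemma ordC_comp_sigma {h : RatFunc ℂ} (hh : h ≠ 0) :
    ordC (comp h (RatFunc.X)⁻¹) 0 = -h.intDegree := by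
  rw [show comp h (RatFunc.X)⁻¹
      = aeval (RatFunc.X : RatFunc ℂ)⁻¹ h.num / aeval (RatFunc.X : RatFunc ℂ)⁻¹ h.denom from rfl,
    ordC_div (aeval_ne_zero sigma_trans (RatFunc.num_ne_zero hh))
      (aeval_ne_zero sigma_trans h.denom_ne_zero),
    ordC_aeval_sigma (RatFunc.num_ne_zero hh), ordC_aeval_sigma h.denom_ne_zero,
    RatFunc.intDegree]
  ring

/-- Order at infinity of a differential equals order at 0 of its pullback under σ. -/
lemma ord_infty_eq (k : ℕ) {h : RatFunc ℂ} (hh : h ≠ 0) :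
    ordC (pullback k (RatFunc.X)⁻¹ h) 0 = -h.intDegree - 2 * k := by
  rw [pullback, ordC_mul (comp_ne_zero sigma_trans hh) (pow_ne_zero _ deriv_sigma_ne_zero),
    ordC_pow deriv_sigma_ne_zero, ordC_comp_sigma hh, ordC_deriv_sigma_zero]
  ring




lemma deriv_ne_zero {f : RatFunc ℂ} (hf : Transcendental ℂ f) : deriv f ≠ 0 := by
  obtain ⟨z, hz⟩ := f.denom.exists_eval_ne_zero_of_natDegree_lt_card f.denom_ne_zero
    ((Cardinal.nat_lt_aleph0 _).trans_le (Cardinal.aleph0_le_mk ℂ))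
  exact (ordC_deriv hf hz (div_mul_cancel₀ (f.num.eval z) hz).symm).1

/-- Master lemma at a finite point. -/
lemma pullback_ordC (k : ℕ) {f g : RatFunc ℂ} (hf : Transcendental ℂ f) (hg : g ≠ 0) (z : ℂ) :
    ∃ e : ℕ, 1 ≤ e ∧ ordC (pullback k f g) z
      = e * (ordDiff k g (evalP1 f (z : P1)) + k) - k := by
  by_cases hden : f.denom.eval z = 0
  · -- pole of f at z
    have hval : evalP1 f (z : P1) = (∞ : P1) := by
      show (if f.denom.eval z = 0 then (∞:P1) else _) = (∞ : P1)
      rw [if_pos hden]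
    rw [hval]
    show ∃ e : ℕ, 1 ≤ e ∧ ordC (pullback k f g) z = e * ((-g.intDegree - 2 * k) + k) - k
    have hf0 : f ≠ 0 := fun h0 => transcendental_ne_C hf 0 (by rw [h0]; simp)
    set F := f⁻¹ with hF_def
    have hFt : Transcendental ℂ F := transcendental_inv hf
    set G := pullback k (RatFunc.X)⁻¹ g with hG_def
    have hGne : G ≠ 0 :=
      mul_ne_zero (comp_ne_zero sigma_trans hg) (pow_ne_zero _ deriv_sigma_ne_zero)
    have hpb : pullback k f g = pullback k F G := by
      rw [hG_def, pullback_comp k g hFt, comp_inv hFt, comp_X hFt, hF_def, inv_inv]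
    have hfnum : f.num.eval z ≠ 0 := by
      obtain ⟨a, b, hab⟩ := f.isCoprime_num_denom
      intro h0
      have := congrArg (Polynomial.eval z) hab
      simp only [Polynomial.eval_add, Polynomial.eval_mul, Polynomial.eval_one, h0, hden,
        mul_zero, add_zero, zero_add] at this
      simp at this
    have hrepF : F = am f.denom / am f.num := by
      rw [hF_def]
      conv_lhs => rw [← RatFunc.num_div_denom f]
      rw [inv_div]
    have hcrossF : F.num * f.num = F.denom * f.denom := cross (RatFunc.num_ne_zero hf0) hrepF
    have hFnum : F.num.eval z = 0 := by
      have := congrArg (Polynomial.eval z) hcrossF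
      simp only [Polynomial.eval_mul, hden, mul_zero] at this
      exact (mul_eq_zero.mp this).resolve_right hfnum
    have hFden : F.denom.eval z ≠ 0 := by
      obtain ⟨a, b, hab⟩ := F.isCoprime_num_denom
      intro h0
      have := congrArg (Polynomial.eval z) hab
      simp only [Polynomial.eval_add, Polynomial.eval_mul, Polynomial.eval_one, h0, hFnum,
        mul_zero, add_zero, zero_add] at this
      simp at this
    obtain ⟨e, he1, hcore⟩ := core hFt hGne k (y := 0) hFden (by rw [hFnum]; ring)
    refine ⟨e, he1, ?_⟩
    have hG0 : ordC G 0 = -g.intDegree - 2 * k := by rw [hG_def]; exact ord_infty_eq k hg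
    rw [hpb, hcore, hG0]
  · -- finite value
    have hval : evalP1 f (z : P1) = ((f.num.eval z / f.denom.eval z : ℂ) : P1) := by
      show (if f.denom.eval z = 0 then (∞:P1) else _) = _
      rw [if_neg hden]
    rw [hval]
    show ∃ e : ℕ, 1 ≤ e ∧ ordC (pullback k f g) z
      = e * (ordC g (f.num.eval z / f.denom.eval z) + k) - k
    exact core hf hg k hden (div_mul_cancel₀ (f.num.eval z) hden).symm

/-! ### The reflection representation of `comp f σ` -/

lemma aeval_sigma_pow (p : Polynomial ℂ) {M : ℕ} (hM : p.natDegree ≤ M) :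
    aeval (RatFunc.X : RatFunc ℂ)⁻¹ p * RatFunc.X ^ M = am (Polynomial.reflect M p) := by
  letI : Invertible (RatFunc.X : RatFunc ℂ) := invertibleOfNonzero X_ne_zero'
  have hdeg : (Polynomial.reflect M p).natDegree ≤ M := by
    rw [Polynomial.natDegree_le_iff_coeff_eq_zero]
    intro N hN
    rw [Polynomial.coeff_reflect, Polynomial.revAt_eq_self_of_lt hN]
    exact Polynomial.coeff_eq_zero_of_natDegree_lt (hM.trans_lt hN)
  have hrr : Polynomial.reflect M (Polynomial.reflect M p) = p := by
    ext i
    rw [Polynomial.coeff_reflect, Polynomial.coeff_reflect, Polynomial.revAt_invol]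
  have h := Polynomial.eval₂_reflect_mul_pow (algebraMap ℂ (RatFunc ℂ)) RatFunc.X M
    (Polynomial.reflect M p) hdeg
  rw [hrr, invOf_eq_inv] at h
  have haev : ∀ q : Polynomial ℂ, Polynomial.eval₂ (algebraMap ℂ (RatFunc ℂ)) RatFunc.X q
      = am q := by
    intro q
    rw [← Polynomial.aeval_def, ← RatFunc.algebraMap_X, Polynomial.aeval_algebraMap_apply]
    simp
  rw [haev] at h
  rw [← h, Polynomial.aeval_def]

lemma comp_sigma_rep (f : RatFunc ℂ) :
    comp f (RatFunc.X)⁻¹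
      = am (Polynomial.reflect (degRat f) f.num) / am (Polynomial.reflect (degRat f) f.denom) := by
  set M := degRat f with hM_def
  have hM1 : f.num.natDegree ≤ M := le_max_left _ _
  have hM2 : f.denom.natDegree ≤ M := le_max_right _ _
  have h1 := aeval_sigma_pow f.num hM1
  have h2 := aeval_sigma_pow f.denom hM2
  have hd : aeval (RatFunc.X : RatFunc ℂ)⁻¹ f.denom ≠ 0 :=
    aeval_ne_zero sigma_trans f.denom_ne_zero
  have hBr : am (Polynomial.reflect M f.denom) ≠ 0 := by
    have : Polynomial.reflect M f.denom ≠ 0 :=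
      fun h => f.denom_ne_zero (Polynomial.reflect_eq_zero_iff.mp h)
    simpa using this
  rw [show comp f (RatFunc.X)⁻¹
      = aeval (RatFunc.X : RatFunc ℂ)⁻¹ f.num / aeval (RatFunc.X : RatFunc ℂ)⁻¹ f.denom from rfl,
    div_eq_div_iff hd hBr, ← h1, ← h2]
  ring

lemma eval_zero_reflect (p : Polynomial ℂ) (M : ℕ) :
    (Polynomial.reflect M p).eval 0 = p.coeff M := by
  rw [← Polynomial.coeff_zero_eq_eval_zero, Polynomial.coeff_reflect,
    Polynomial.revAt_le (Nat.zero_le M), Nat.sub_zero]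

/-- The value of `comp f σ` at `0` matches `evalP1 f ∞`. -/
lemma evalP1_comp_sigma_zero {f : RatFunc ℂ} (hf : Transcendental ℂ f) :
    evalP1 (comp f (RatFunc.X)⁻¹) ((0 : ℂ) : P1) = evalP1 f ∞ := by
  set F := comp f (RatFunc.X)⁻¹ with hF_def
  set M := degRat f with hM_def
  set A := Polynomial.reflect M f.num with hA_def
  set B := Polynomial.reflect M f.denom with hB_def
  have hf0 : f ≠ 0 := fun h0 => transcendental_ne_C hf 0 (by rw [h0]; simp)
  have hA : A ≠ 0 := fun h => RatFunc.num_ne_zero hf0 (Polynomial.reflect_eq_zero_iff.mp h)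
  have hB : B ≠ 0 := fun h => f.denom_ne_zero (Polynomial.reflect_eq_zero_iff.mp h)
  have hrep : F = am A / am B := comp_sigma_rep f
  have hcross : F.num * B = F.denom * A := cross hB hrep
  have hcross0 : F.num.eval 0 * B.eval 0 = F.denom.eval 0 * A.eval 0 := by
    have := congrArg (Polynomial.eval 0) hcross
    simpa using this
  have hAz : A.eval 0 = f.num.coeff M := eval_zero_reflect _ _
  have hBz : B.eval 0 = f.denom.coeff M := eval_zero_reflect _ _
  have hglhs : evalP1 F ((0 : ℂ) : P1)
      = if F.denom.eval 0 = 0 then (∞ : P1)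
        else ((F.num.eval 0 / F.denom.eval 0 : ℂ) : P1) := rfl
  have hgrhs : evalP1 f ∞
      = (if 0 < f.intDegree then (∞ : P1)
         else if f.intDegree < 0 then ((0 : ℂ) : P1)
         else ((f.num.leadingCoeff / f.denom.leadingCoeff : ℂ) : P1)) := rfl
  have hint : f.intDegree = (f.num.natDegree : ℤ) - f.denom.natDegree := rfl
  rcases lt_trichotomy f.num.natDegree f.denom.natDegree with hmn | hmn | hmn
  · -- intDegree < 0 : value 0
    have hMq : M = f.denom.natDegree := by
      rw [hM_def, degRat, max_eq_right (le_of_lt hmn)]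
    have hB0 : B.eval 0 ≠ 0 := by
      rw [hBz, hMq, Polynomial.coeff_natDegree]
      exact Polynomial.leadingCoeff_ne_zero.mpr f.denom_ne_zero
    have hA0 : A.eval 0 = 0 := by
      rw [hAz, hMq]
      exact Polynomial.coeff_eq_zero_of_natDegree_lt hmn
    have hFden : F.denom.eval 0 ≠ 0 := by
      have hdvd : F.denom ∣ B := (RatFunc.denom_dvd hB).mpr ⟨A, hrep⟩
      obtain ⟨t, ht⟩ := hdvd
      intro h0
      apply hB0
      rw [ht, Polynomial.eval_mul, h0, zero_mul]
    have hFnum : F.num.eval 0 = 0 := by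
      have : F.num.eval 0 * B.eval 0 = 0 := by rw [hcross0, hA0, mul_zero]
      exact (mul_eq_zero.mp this).resolve_right hB0
    rw [hglhs, hgrhs, if_neg hFden, if_neg (by rw [hint]; omega), if_pos (by rw [hint]; omega)]
    rw [hFnum, zero_div]
  · -- intDegree = 0 : value lc/lc
    have hMp : M = f.num.natDegree := by rw [hM_def, degRat, hmn, max_self]
    have hMq : M = f.denom.natDegree := by rw [hMp, hmn]
    have hB0 : B.eval 0 ≠ 0 := by
      rw [hBz, hMq, Polynomial.coeff_natDegree]
      exact Polynomial.leadingCoeff_ne_zero.mpr f.denom_ne_zero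
    have hA0 : A.eval 0 = f.num.leadingCoeff := by
      rw [hAz, hMp, Polynomial.coeff_natDegree]
    have hFden : F.denom.eval 0 ≠ 0 := by
      have hdvd : F.denom ∣ B := (RatFunc.denom_dvd hB).mpr ⟨A, hrep⟩
      obtain ⟨t, ht⟩ := hdvd
      intro h0
      apply hB0
      rw [ht, Polynomial.eval_mul, h0, zero_mul]
    have hBlc : B.eval 0 = f.denom.leadingCoeff := by
      rw [hBz, hMq, Polynomial.coeff_natDegree]
    have hlcq : f.denom.leadingCoeff ≠ 0 := Polynomial.leadingCoeff_ne_zero.mpr f.denom_ne_zero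
    rw [hglhs, hgrhs, if_neg hFden, if_neg (by rw [hint]; omega), if_neg (by rw [hint]; omega)]
    congr 1
    have hval : F.num.eval 0 * f.denom.leadingCoeff = F.denom.eval 0 * f.num.leadingCoeff := by
      rw [← hA0, ← hBlc]
      exact hcross0
    rw [div_eq_div_iff hFden hlcq]
    linear_combination hval
  · -- intDegree > 0 : infinity
    have hMp : M = f.num.natDegree := by
      rw [hM_def, degRat, max_eq_left (le_of_lt hmn)]
    have hA0 : A.eval 0 ≠ 0 := by
      rw [hAz, hMp, Polynomial.coeff_natDegree]
      exact Polynomial.leadingCoeff_ne_zero.mpr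
        (RatFunc.num_ne_zero (fun h0 => transcendental_ne_C hf 0 (by rw [h0]; simp)))
    have hB0 : B.eval 0 = 0 := by
      rw [hBz, hMp]
      exact Polynomial.coeff_eq_zero_of_natDegree_lt hmn
    have hFden : F.denom.eval 0 = 0 := by
      have : F.denom.eval 0 * A.eval 0 = 0 := by rw [← hcross0, hB0, mul_zero]
      exact (mul_eq_zero.mp this).resolve_right hA0
    rw [hglhs, hgrhs, if_pos hFden, if_pos (by rw [hint]; omega)]

lemma C_ne_zero' {lam : ℂ} (hlam : lam ≠ 0) : (RatFunc.C lam : RatFunc ℂ) ≠ 0 := by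
  rw [← RatFunc.algebraMap_C]
  simpa using Polynomial.C_ne_zero.mpr hlam

lemma ordDiff_C_mul (k : ℕ) {g : RatFunc ℂ} (hg : g ≠ 0) {lam : ℂ} (hlam : lam ≠ 0) (x : P1) :
    ordDiff k (RatFunc.C lam * g) x = ordDiff k g x := by
  cases x with
  | none =>
    show -(RatFunc.C lam * g).intDegree - 2 * k = -g.intDegree - 2 * k
    rw [RatFunc.intDegree_mul (C_ne_zero' hlam) hg, RatFunc.intDegree_C]
    ring
  | some z =>
    show ordC (RatFunc.C lam * g) z = ordC g z
    rw [ordC_mul (C_ne_zero' hlam) hg, ordC_C]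
    ring

lemma master (k : ℕ) {f g : RatFunc ℂ} (hf : Transcendental ℂ f) (hg : g ≠ 0) (x : P1) :
    ∃ e : ℕ, 1 ≤ e ∧ ordDiff k (pullback k f g) x
      = e * (ordDiff k g (evalP1 f x) + k) - k := by
  cases x with
  | some z => exact pullback_ordC k hf hg z
  | none =>
    have hpb0 : pullback k f g ≠ 0 :=
      mul_ne_zero (comp_ne_zero hf hg) (pow_ne_zero _ (deriv_ne_zero hf))
    have h1 : ordDiff k (pullback k f g) (∞ : P1)
        = ordC (pullback k (RatFunc.X)⁻¹ (pullback k f g)) 0 := by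
      rw [ord_infty_eq k hpb0]; rfl
    have h2 : pullback k (RatFunc.X)⁻¹ (pullback k f g) = pullback k (comp f (RatFunc.X)⁻¹) g :=
      pullback_comp k g sigma_trans
    obtain ⟨e, he1, hc⟩ := pullback_ordC k (transcendental_comp_sigma hf) hg 0
    refine ⟨e, he1, ?_⟩
    show ordDiff k (pullback k f g) (∞ : P1) = e * (ordDiff k g (evalP1 f (∞ : P1)) + k) - k
    rw [h1, h2, hc, evalP1_comp_sigma_zero hf]

lemma trans_of_degRat {f : RatFunc ℂ} {d : ℕ} (hdeg : degRat f = d) (hd : 1 < d) :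
    Transcendental ℂ f := by
  apply transcendental_of_ne_C
  intro c hc
  rw [hc] at hdeg
  rw [degRat, RatFunc.num_C, RatFunc.denom_C, Polynomial.natDegree_C, Polynomial.natDegree_one]
    at hdeg
  omega

theorem final (f g : RatFunc ℂ) (d k : ℕ) (lam : ℂ)
    (hdeg : degRat f = d) (hd : 1 < d) (hk : 1 ≤ k)
    (hg : g ≠ 0) (hlam : lam ≠ 0)
    (heq : pullback k f g = RatFunc.C lam * g) :
    evalP1 f ⁻¹' {x : P1 | ordDiff k g x = -(k : ℤ)}
      = {x : P1 | ordDiff k g x = -(k : ℤ)} := by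
  have hftrans : Transcendental ℂ f := trans_of_degRat hdeg hd
  apply Set.ext
  intro x
  simp only [Set.mem_preimage, Set.mem_setOf_eq]
  obtain ⟨e, he1, hrel⟩ := master k hftrans hg x
  have hx : ordDiff k g x = e * (ordDiff k g (evalP1 f x) + k) - k := by
    rw [← ordDiff_C_mul k hg hlam x, ← heq]
    exact hrel
  constructor
  · intro h
    rw [hx, h]
    ring
  · intro h
    rw [h] at hx
    have h0 : (e : ℤ) * (ordDiff k g (evalP1 f x) + k) = 0 := by linarith
    rcases mul_eq_zero.mp h0 with h1 | h1
    · exfalso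
      have : (e : ℤ) ≠ 0 := by exact_mod_cast Nat.one_le_iff_ne_zero.mp he1
      exact this h1
    · linarith

end ParallelTensor

/-- If `f*q = λ·q` then the set of poles of `q` of maximal order `k` is completely
invariant: `f⁻¹(S) = S`. -/
theorem stmt_4 (f g : RatFunc ℂ) (d k : ℕ) (lam : ℂ)
    (hdeg : ParallelTensor.degRat f = d) (hd : 1 < d) (hk : 1 ≤ k)
    (hg : g ≠ 0) (hlam : lam ≠ 0)
    (heq : ParallelTensor.pullback k f g = RatFunc.C lam * g) :
    ParallelTensor.evalP1 f ⁻¹' {x : P1 | ParallelTensor.ordDiff k g x = -(k : ℤ)}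
      = {x : P1 | ParallelTensor.ordDiff k g x = -(k : ℤ)} :=
  ParallelTensor.final f g d k lam hdeg hd hk hg hlam heq

end
end

section
/- Let f : P¹ → P¹ be a rational map of degree d > 1, k ≥ 1 an integer, λ ∈ ℂ nonzero, and q a nonzero meromorphic k-differential on P¹ with f*q = λ·q. Then f is postcritically finite: the postcritical set P_f = ⋃_{n≥1} f^n(Ram_f), where Ram_f is the set of ramification points of f, is a finite set. -/
open Polynomial OnePoint

noncomputable section

namespace PfAux
open ParallelTensor

abbrev RF := RatFunc ℂ

abbrev am : ℂ[X] → RF := algebraMap ℂ[X] (RatFunc ℂ)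

lemma am_ne {p : ℂ[X]} (hp : p ≠ 0) : am p ≠ 0 := RatFunc.algebraMap_ne_zero hp

/-! ### ordC basics -/

lemma ordC_rep {g : RF} {p q : ℂ[X]} (hp : p ≠ 0) (hq : q ≠ 0)
    (hg : g = am p / am q) (x : ℂ) :
    ordC g x = (p.rootMultiplicity x : ℤ) - (q.rootMultiplicity x : ℤ) := by
  have hkey : g.num * q = p * g.denom := (RatFunc.num_mul_eq_mul_denom_iff hq).2 hg
  have hg0 : g ≠ 0 := by
    rw [hg]; exact div_ne_zero (am_ne hp) (am_ne hq)
  have hnum : g.num ≠ 0 := RatFunc.num_ne_zero hg0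
  have h1 := congrArg (Polynomial.rootMultiplicity x) hkey
  rw [Polynomial.rootMultiplicity_mul (mul_ne_zero hnum hq),
      Polynomial.rootMultiplicity_mul (mul_ne_zero hp g.denom_ne_zero)] at h1
  unfold ordC; omega

lemma ordC_algebraMap {p : ℂ[X]} (hp : p ≠ 0) (x : ℂ) :
    ordC (am p) x = p.rootMultiplicity x := by
  have h1 : (1 : ℂ[X]).rootMultiplicity x = 0 :=
    Polynomial.rootMultiplicity_eq_zero (by simp [Polynomial.IsRoot])
  have := ordC_rep hp one_ne_zero (g := am p) (by simp) x
  rw [this, h1]; simp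

lemma ordC_C {c : ℂ} (hc : c ≠ 0) (x : ℂ) : ordC (RatFunc.C c) x = 0 := by
  rw [← RatFunc.algebraMap_C]
  rw [ordC_algebraMap (by simpa using hc)]
  simp [Polynomial.rootMultiplicity_C]

lemma ordC_mul {a b : RF} (ha : a ≠ 0) (hb : b ≠ 0) (x : ℂ) :
    ordC (a * b) x = ordC a x + ordC b x := by
  have hrep : a * b = am (a.num * b.num) / am (a.denom * b.denom) := by
    conv_lhs => rw [← RatFunc.num_div_denom a, ← RatFunc.num_div_denom b]
    simp only [map_mul]
    rw [div_mul_div_comm]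
  rw [ordC_rep (mul_ne_zero (RatFunc.num_ne_zero ha) (RatFunc.num_ne_zero hb))
      (mul_ne_zero a.denom_ne_zero b.denom_ne_zero) hrep x,
    Polynomial.rootMultiplicity_mul
      (mul_ne_zero (RatFunc.num_ne_zero ha) (RatFunc.num_ne_zero hb)),
    Polynomial.rootMultiplicity_mul (mul_ne_zero a.denom_ne_zero b.denom_ne_zero)]
  unfold ordC; push_cast; ring

lemma ordC_one (x : ℂ) : ordC 1 x = 0 := by
  simp [ordC, RatFunc.num_one, RatFunc.denom_one]

lemma ordC_pow {a : RF} (ha : a ≠ 0) (n : ℕ) (x : ℂ) :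
    ordC (a ^ n) x = n * ordC a x := by
  induction n with
  | zero => simp [ordC_one]
  | succ n ih =>
    rw [pow_succ, ordC_mul (pow_ne_zero _ ha) ha, ih]; push_cast; ring

lemma ordC_div {a b : RF} (ha : a ≠ 0) (hb : b ≠ 0) (x : ℂ) :
    ordC (a / b) x = ordC a x - ordC b x := by
  have h : a / b * b = a := div_mul_cancel₀ a hb
  have := ordC_mul (a := a / b) (b := b) (div_ne_zero ha hb) hb x
  rw [h] at this; omega

lemma num_denom_not_both_zero (g : RF) (x : ℂ) (h : g.num.eval x = 0) :
    g.denom.eval x ≠ 0 := by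
  obtain ⟨a, b, hab⟩ := g.isCoprime_num_denom
  intro h2
  have := congrArg (Polynomial.eval x) hab
  simp [h, h2] at this

lemma num_eval_ne_of_denom_eval_eq (g : RF) (x : ℂ) (h : g.denom.eval x = 0) :
    g.num.eval x ≠ 0 := by
  intro h2; exact num_denom_not_both_zero g x h2 h

lemma denom_eval_zero_iff {g : RF} (hg : g ≠ 0) (x : ℂ) :
    g.denom.eval x = 0 ↔ ordC g x < 0 := by
  constructor
  · intro h
    have h1 : g.num.rootMultiplicity x = 0 :=
      Polynomial.rootMultiplicity_eq_zero (num_eval_ne_of_denom_eval_eq g x h)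
    have h2 : 0 < g.denom.rootMultiplicity x :=
      (Polynomial.rootMultiplicity_pos g.denom_ne_zero).2 h
    unfold ordC; omega
  · intro h
    by_contra h'
    have h2 : g.denom.rootMultiplicity x = 0 := Polynomial.rootMultiplicity_eq_zero h'
    unfold ordC at h; omega

lemma eval_rep {p q : ℂ[X]} {g : RF} {x : ℂ} (hq : q.eval x ≠ 0)
    (hg : g = am p / am q) :
    g.denom.eval x ≠ 0 ∧ g.num.eval x / g.denom.eval x = p.eval x / q.eval x := by
  have hq0 : q ≠ 0 := fun h => hq (by simp [h])
  have hdvd : g.denom ∣ q := hg ▸ RatFunc.denom_div_dvd p q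
  obtain ⟨c, hc⟩ := hdvd
  have hde : g.denom.eval x ≠ 0 := by
    intro h; rw [hc] at hq; simp [h] at hq
  refine ⟨hde, ?_⟩
  have hkey : g.num * q = p * g.denom := (RatFunc.num_mul_eq_mul_denom_iff hq0).2 hg
  have := congrArg (Polynomial.eval x) hkey
  simp only [Polynomial.eval_mul] at this
  field_simp
  linear_combination this

lemma ordC_eq_zero_of_evals {g : RF} {x : ℂ} (hd : g.denom.eval x ≠ 0)
    (hn : g.num.eval x ≠ 0) : ordC g x = 0 := by
  unfold ordC
  rw [Polynomial.rootMultiplicity_eq_zero hn, Polynomial.rootMultiplicity_eq_zero hd]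
  simp

/-! ### Nonconstant rational functions and composition -/

def NC (u : RF) : Prop := ∀ c : ℂ, u ≠ RatFunc.C c

lemma NC.ne_zero {u : RF} (hu : NC u) : u ≠ 0 := by
  intro h; exact hu 0 (by simp [h])

lemma NC.sub_C_ne {u : RF} (hu : NC u) (c : ℂ) : u - RatFunc.C c ≠ 0 := by
  intro h; exact hu c (by linear_combination (norm := module) h)

lemma aeval_ne_zero_of_NC {u : RF} (hu : NC u) : ∀ {p : ℂ[X]}, p ≠ 0 →
    Polynomial.aeval u p ≠ 0 := by
  suffices h : ∀ n (p : ℂ[X]), p.natDegree = n → p ≠ 0 → Polynomial.aeval u p ≠ 0 by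
    intro p hp; exact h _ p rfl hp
  intro n
  induction n using Nat.strong_induction_on with
  | _ n ih =>
    intro p hn hp
    rcases Nat.eq_zero_or_pos n with h0 | h1
    · subst h0
      obtain ⟨c, rfl⟩ : ∃ c, p = Polynomial.C c :=
        ⟨p.coeff 0, Polynomial.eq_C_of_natDegree_eq_zero hn⟩
      simp only [Polynomial.aeval_C]
      simpa [RatFunc.algebraMap_eq_C] using fun h => hp (by simp [h])
    · have hdeg : 0 < p.degree :=
        Polynomial.natDegree_pos_iff_degree_pos.mp (by omega)
      obtain ⟨r, hr⟩ := Complex.exists_root hdeg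
      obtain ⟨p₁, rfl⟩ := (Polynomial.dvd_iff_isRoot).2 hr
      have hp₁ : p₁ ≠ 0 := fun h => hp (by simp [h])
      have hdeg1 : ((Polynomial.X - Polynomial.C r) * p₁).natDegree = 1 + p₁.natDegree := by
        rw [Polynomial.natDegree_mul (Polynomial.X_sub_C_ne_zero r) hp₁,
          Polynomial.natDegree_X_sub_C]
      rw [map_mul]
      refine mul_ne_zero ?_ (ih p₁.natDegree (by omega) p₁ rfl hp₁)
      simpa [RatFunc.algebraMap_eq_C, sub_eq_zero] using
        fun h => (hu r) h

lemma comp_def (g u : RF) :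
    comp g u = Polynomial.aeval u g.num / Polynomial.aeval u g.denom := rfl

lemma comp_rep {u : RF} (hu : NC u) {p q : ℂ[X]} (hq : q ≠ 0) {g : RF}
    (hg : g = am p / am q) :
    comp g u = Polynomial.aeval u p / Polynomial.aeval u q := by
  have hkey : g.num * q = p * g.denom := (RatFunc.num_mul_eq_mul_denom_iff hq).2 hg
  have h2 := congrArg (Polynomial.aeval u) hkey
  simp only [map_mul] at h2
  rw [comp_def, div_eq_div_iff (aeval_ne_zero_of_NC hu g.denom_ne_zero)
    (aeval_ne_zero_of_NC hu hq)]
  linear_combination h2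

lemma comp_ne_zero {u : RF} (hu : NC u) {g : RF} (hg : g ≠ 0) : comp g u ≠ 0 :=
  div_ne_zero (aeval_ne_zero_of_NC hu (RatFunc.num_ne_zero hg))
    (aeval_ne_zero_of_NC hu g.denom_ne_zero)

lemma comp_C (c : ℂ) (u : RF) : comp (RatFunc.C c) u = RatFunc.C c := by
  rw [comp_def, RatFunc.num_C, RatFunc.denom_C]
  simp [RatFunc.algebraMap_eq_C]

lemma comp_one (u : RF) : comp 1 u = 1 := by
  rw [comp_def, RatFunc.num_one, RatFunc.denom_one]; simp

lemma comp_algebraMap {u : RF} (hu : NC u) (p : ℂ[X]) :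
    comp (am p) u = Polynomial.aeval u p := by
  have hrep : am p = am p / am (1 : ℂ[X]) := by simp
  rw [comp_rep hu one_ne_zero hrep]
  simp

lemma comp_mul {u : RF} (hu : NC u) (a b : RF) :
    comp (a * b) u = comp a u * comp b u := by
  have hrep : a * b = am (a.num * b.num) / am (a.denom * b.denom) := by
    conv_lhs => rw [← RatFunc.num_div_denom a, ← RatFunc.num_div_denom b]
    simp only [map_mul]
    rw [div_mul_div_comm]
  rw [comp_rep hu (mul_ne_zero a.denom_ne_zero b.denom_ne_zero) hrep]
  simp only [map_mul]
  rw [comp_def, comp_def, div_mul_div_comm]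

lemma comp_add {u : RF} (hu : NC u) (a b : RF) :
    comp (a + b) u = comp a u + comp b u := by
  have h1 : am a.denom ≠ 0 := am_ne a.denom_ne_zero
  have h2 : am b.denom ≠ 0 := am_ne b.denom_ne_zero
  have hrep : a + b = am (a.num * b.denom + b.num * a.denom) / am (a.denom * b.denom) := by
    conv_lhs => rw [← RatFunc.num_div_denom a, ← RatFunc.num_div_denom b]
    rw [div_add_div _ _ h1 h2]
    simp only [map_mul, map_add]
    ring
  rw [comp_rep hu (mul_ne_zero a.denom_ne_zero b.denom_ne_zero) hrep]
  simp only [map_mul, map_add]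
  have h3 := aeval_ne_zero_of_NC hu a.denom_ne_zero
  have h4 := aeval_ne_zero_of_NC hu b.denom_ne_zero
  rw [comp_def, comp_def, div_add_div _ _ h3 h4]
  ring

lemma comp_pow {u : RF} (hu : NC u) (a : RF) (n : ℕ) :
    comp (a ^ n) u = comp a u ^ n := by
  induction n with
  | zero => simpa using comp_one u
  | succ n ih => rw [pow_succ, comp_mul hu, ih, pow_succ]

lemma comp_div {u : RF} (hu : NC u) (a : RF) {b : RF} (hb : b ≠ 0) :
    comp (a / b) u = comp a u / comp b u := by
  have h : a / b * b = a := div_mul_cancel₀ a hb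
  have h2 := comp_mul hu (a / b) b
  rw [h] at h2
  rw [eq_div_iff (comp_ne_zero hu hb)]
  exact h2.symm

lemma aeval_X_eq (p : ℂ[X]) : Polynomial.aeval (RatFunc.X : RF) p = am p := by
  induction p using Polynomial.induction_on' with
  | add a b ha hb => simp only [map_add, ha, hb]
  | monomial n a =>
    rw [← Polynomial.C_mul_X_pow_eq_monomial]
    simp only [map_mul, map_pow, Polynomial.aeval_C, Polynomial.aeval_X]
    rw [RatFunc.algebraMap_C, RatFunc.algebraMap_X, RatFunc.algebraMap_eq_C]

lemma comp_X (g : RF) : comp g RatFunc.X = g := by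
  rw [comp_def, aeval_X_eq, aeval_X_eq, RatFunc.num_div_denom]

lemma comp_aeval {σ : RF} (hσ : NC σ) (v : RF) (p : ℂ[X]) :
    comp (Polynomial.aeval v p) σ = Polynomial.aeval (comp v σ) p := by
  induction p using Polynomial.induction_on' with
  | add a b ha hb => rw [map_add, comp_add hσ, ha, hb, map_add]
  | monomial n a =>
    rw [Polynomial.aeval_monomial, Polynomial.aeval_monomial]
    rw [comp_mul hσ, comp_pow hσ]
    congr 1
    rw [RatFunc.algebraMap_eq_C, comp_C]

lemma comp_assoc {f σ : RF} (hf : NC f) (hσ : NC σ) (g : RF) :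
    comp (comp g f) σ = comp g (comp f σ) := by
  rw [comp_def g f, comp_div hσ _ (aeval_ne_zero_of_NC hf g.denom_ne_zero),
    comp_aeval hσ, comp_aeval hσ]
  exact (comp_def _ _).symm

/-! ### deriv -/

lemma deriv_def (g : RF) :
    deriv g = am (Polynomial.derivative g.num * g.denom - g.num * Polynomial.derivative g.denom) /
      am (g.denom ^ 2) := rfl

lemma deriv_rep {p q : ℂ[X]} (hq : q ≠ 0) {g : RF} (hg : g = am p / am q) :
    deriv g = am (Polynomial.derivative p * q - p * Polynomial.derivative q) / am (q ^ 2) := by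
  have hkey : g.num * q = p * g.denom := (RatFunc.num_mul_eq_mul_denom_iff hq).2 hg
  have hkey' : Polynomial.derivative (g.num * q) = Polynomial.derivative (p * g.denom) := by
    rw [hkey]
  rw [Polynomial.derivative_mul, Polynomial.derivative_mul] at hkey'
  rw [deriv_def, div_eq_div_iff (am_ne (pow_ne_zero 2 g.denom_ne_zero))
    (am_ne (pow_ne_zero 2 hq)), ← map_mul, ← map_mul]
  refine congrArg (algebraMap ℂ[X] (RatFunc ℂ)) ?_
  linear_combination (q * g.denom) * hkey' -
    (Polynomial.derivative q * g.denom + Polynomial.derivative g.denom * q) * hkey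

lemma deriv_algebraMap (p : ℂ[X]) : deriv (am p) = am (Polynomial.derivative p) := by
  have hrep : am p = am p / am (1 : ℂ[X]) := by simp
  rw [deriv_rep one_ne_zero hrep]
  simp

lemma deriv_C (c : ℂ) : deriv (RatFunc.C c) = 0 := by
  rw [← RatFunc.algebraMap_C, deriv_algebraMap]
  simp

lemma deriv_one : deriv (1 : RF) = 0 := by
  have := deriv_C 1; simpa using this

lemma deriv_add (a b : RF) : deriv (a + b) = deriv a + deriv b := by
  have h1 : am a.denom ≠ 0 := am_ne a.denom_ne_zero
  have h2 : am b.denom ≠ 0 := am_ne b.denom_ne_zero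
  have hrep : a + b = am (a.num * b.denom + b.num * a.denom) / am (a.denom * b.denom) := by
    conv_lhs => rw [← RatFunc.num_div_denom a, ← RatFunc.num_div_denom b]
    rw [div_add_div _ _ h1 h2]
    simp only [map_mul, map_add]
    ring
  rw [deriv_rep (mul_ne_zero a.denom_ne_zero b.denom_ne_zero) hrep, deriv_def, deriv_def]
  simp only [derivative_add, derivative_mul, map_mul, map_add, map_sub, map_pow]
  field_simp
  ring

lemma deriv_mul (a b : RF) : deriv (a * b) = deriv a * b + a * deriv b := by
  set na := a.num with hna
  set da := a.denom with hda0
  set nb := b.num with hnb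
  set db := b.denom with hdb0
  have h1 : am da ≠ 0 := am_ne a.denom_ne_zero
  have h2 : am db ≠ 0 := am_ne b.denom_ne_zero
  have ha' : a = am na / am da := (RatFunc.num_div_denom a).symm
  have hb' : b = am nb / am db := (RatFunc.num_div_denom b).symm
  have hrep : a * b = am (na * nb) / am (da * db) := by
    rw [ha', hb']
    simp only [map_mul]
    rw [div_mul_div_comm]
  rw [deriv_rep (mul_ne_zero a.denom_ne_zero b.denom_ne_zero) hrep, deriv_def, deriv_def]
  rw [← hna, ← hda0, ← hnb, ← hdb0]
  rw [ha', hb']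
  simp only [derivative_mul, map_mul, map_add, map_sub, map_pow]
  field_simp
  ring

lemma deriv_div (a : RF) {b : RF} (hb : b ≠ 0) :
    deriv (a / b) = (deriv a * b - a * deriv b) / b ^ 2 := by
  have hab : a / b * b = a := div_mul_cancel₀ a hb
  have h2 : deriv a = deriv (a / b) * b + a / b * deriv b := by
    conv_lhs => rw [← hab]
    exact deriv_mul _ _
  rw [eq_div_iff (pow_ne_zero 2 hb), h2]
  linear_combination (-(ParallelTensor.deriv b)) * hab

lemma deriv_pow (a : RF) (n : ℕ) :
    deriv (a ^ (n + 1)) = RatFunc.C ((n : ℂ) + 1) * a ^ n * deriv a := by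
  induction n with
  | zero => simp [deriv_mul]
  | succ n ih =>
    rw [pow_succ, deriv_mul, ih]
    have hc : RatFunc.C (((n + 1 : ℕ) : ℂ) + 1) = RatFunc.C ((n : ℂ) + 1) + 1 := by
      push_cast
      rw [map_add, map_one]
    rw [hc]
    ring

lemma deriv_aeval (v : RF) (p : ℂ[X]) :
    deriv (Polynomial.aeval v p) = Polynomial.aeval v (Polynomial.derivative p) * deriv v := by
  induction p using Polynomial.induction_on' with
  | add a b ha hb => rw [map_add, deriv_add, ha, hb, derivative_add, map_add, add_mul]
  | monomial n a =>
    cases n with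
    | zero =>
      simp only [Polynomial.monomial_zero_left, Polynomial.aeval_C,
        Polynomial.derivative_C, map_zero, zero_mul]
      rw [RatFunc.algebraMap_eq_C, deriv_C]
    | succ m =>
      rw [Polynomial.aeval_monomial, Polynomial.derivative_monomial, Polynomial.aeval_monomial,
        deriv_mul, RatFunc.algebraMap_eq_C, deriv_C, zero_mul, zero_add, deriv_pow]
      have hc : RatFunc.C (a * ((m : ℂ) + 1)) = RatFunc.C a * RatFunc.C ((m : ℂ) + 1) :=
        map_mul _ _ _
      push_cast
      rw [hc]
      ring
lemma deriv_comp {u : RF} (hu : NC u) (g : RF) :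
    deriv (comp g u) = comp (deriv g) u * deriv u := by
  have hA := aeval_ne_zero_of_NC hu g.denom_ne_zero
  rw [comp_def, deriv_div _ hA, deriv_aeval, deriv_aeval]
  have hrep : deriv g = am (Polynomial.derivative g.num * g.denom -
      g.num * Polynomial.derivative g.denom) / am (g.denom ^ 2) := deriv_def g
  rw [comp_rep hu (pow_ne_zero 2 g.denom_ne_zero) hrep]
  simp only [map_sub, map_mul, map_pow]
  field_simp

/-! ### balanced representation of aeval -/

def bal (f : RF) (p : ℂ[X]) : ℂ[X] :=
  ∑ i ∈ Finset.range (p.natDegree + 1),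
    Polynomial.C (p.coeff i) * f.num ^ i * f.denom ^ (p.natDegree - i)

lemma bal_spec (f : RF) (p : ℂ[X]) :
    am (bal f p) = Polynomial.aeval f p * am (f.denom ^ p.natDegree) := by
  rw [Polynomial.aeval_eq_sum_range, Finset.sum_mul]
  unfold bal
  simp only [map_sum]
  refine Finset.sum_congr rfl fun i hi => ?_
  have hile : i ≤ p.natDegree := by
    simpa using Nat.lt_succ_iff.mp (Finset.mem_range.mp hi)
  have hsplit : f.denom ^ p.natDegree = f.denom ^ i * f.denom ^ (p.natDegree - i) := by
    rw [← pow_add]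
    congr 1
    omega
  rw [hsplit]
  simp only [map_mul, map_pow, Algebra.smul_def]
  have hd : am f.denom ≠ 0 := am_ne f.denom_ne_zero
  have hfi : f ^ i = am f.num ^ i / am f.denom ^ i := by
    conv_lhs => rw [← RatFunc.num_div_denom f]
    rw [div_pow]
  rw [hfi, RatFunc.algebraMap_eq_C, ← RatFunc.algebraMap_C]
  field_simp

lemma bal_ne_zero {f : RF} (hf : NC f) {p : ℂ[X]} (hp : p ≠ 0) : bal f p ≠ 0 := by
  intro h
  have := bal_spec f p
  rw [h] at this
  simp only [map_zero] at this
  exact (mul_ne_zero (aeval_ne_zero_of_NC hf hp)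
    (am_ne (pow_ne_zero _ f.denom_ne_zero))) this.symm

lemma aeval_rep {f : RF} (hf : NC f) (p : ℂ[X]) :
    Polynomial.aeval f p = am (bal f p) / am (f.denom ^ p.natDegree) := by
  rw [bal_spec, mul_div_assoc, div_self (am_ne (pow_ne_zero _ f.denom_ne_zero)), mul_one]

lemma bal_eval_nopole {f : RF} {x : ℂ} (hd : f.denom.eval x ≠ 0) (p : ℂ[X]) :
    (bal f p).eval x =
      (f.denom.eval x) ^ p.natDegree * p.eval (f.num.eval x / f.denom.eval x) := by
  unfold bal
  rw [Polynomial.eval_finset_sum,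
    Polynomial.eval_eq_sum_range (p := p) (f.num.eval x / f.denom.eval x), Finset.mul_sum]
  refine Finset.sum_congr rfl fun i hi => ?_
  have hile : i ≤ p.natDegree := Nat.lt_succ_iff.mp (Finset.mem_range.mp hi)
  have hsplit : (f.denom.eval x) ^ p.natDegree =
      (f.denom.eval x) ^ i * (f.denom.eval x) ^ (p.natDegree - i) := by
    rw [← pow_add]; congr 1; omega
  simp only [Polynomial.eval_mul, Polynomial.eval_pow, Polynomial.eval_C]
  rw [hsplit, div_pow]
  field_simp

lemma bal_eval_pole {f : RF} {x : ℂ} (hd : f.denom.eval x = 0) (p : ℂ[X]) :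
    (bal f p).eval x = p.leadingCoeff * (f.num.eval x) ^ p.natDegree := by
  unfold bal
  rw [Polynomial.eval_finset_sum]
  rw [Finset.sum_eq_single p.natDegree]
  · rw [Nat.sub_self, pow_zero, mul_one, Polynomial.eval_mul, Polynomial.eval_pow,
      Polynomial.eval_C]
    rfl
  · intro i hi hne
    have hile : i ≤ p.natDegree := Nat.lt_succ_iff.mp (Finset.mem_range.mp hi)
    have hlt : 0 < p.natDegree - i := by omega
    simp only [Polynomial.eval_mul, Polynomial.eval_pow, Polynomial.eval_C, hd]
    rw [zero_pow (by omega)]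
    ring
  · intro h
    exact absurd (Finset.mem_range.mpr (Nat.lt_succ_self _)) h

lemma rootMultiplicity_pow' {p : ℂ[X]} (hp : p ≠ 0) (n : ℕ) (x : ℂ) :
    (p ^ n).rootMultiplicity x = n * p.rootMultiplicity x := by
  induction n with
  | zero =>
    simp [Polynomial.rootMultiplicity_eq_zero (by simp [Polynomial.IsRoot] : ¬(1:ℂ[X]).IsRoot x)]
  | succ n ih =>
    rw [pow_succ, Polynomial.rootMultiplicity_mul (mul_ne_zero (pow_ne_zero n hp) hp), ih]
    ring

lemma ordC_aeval_nopole {f : RF} (hf : NC f) {p : ℂ[X]} (hp : p ≠ 0) {x : ℂ}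
    (hd : f.denom.eval x ≠ 0) (hv : p.eval (f.num.eval x / f.denom.eval x) ≠ 0) :
    ordC (Polynomial.aeval f p) x = 0 := by
  rw [ordC_rep (bal_ne_zero hf hp) (pow_ne_zero _ f.denom_ne_zero) (aeval_rep hf p) x]
  rw [Polynomial.rootMultiplicity_eq_zero (p := bal f p) (x := x)
    (by rw [Polynomial.IsRoot, bal_eval_nopole hd]; exact mul_ne_zero (pow_ne_zero _ hd) hv)]
  have hnr : ¬(f.denom ^ p.natDegree).IsRoot x := by
    simp only [Polynomial.IsRoot, Polynomial.eval_pow, pow_eq_zero_iff']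
    exact fun h => hd h.1
  rw [Polynomial.rootMultiplicity_eq_zero hnr]
  simp

lemma ordC_aeval_pole {f : RF} (hf : NC f) {p : ℂ[X]} (hp : p ≠ 0) {x : ℂ}
    (hd : f.denom.eval x = 0) :
    ordC (Polynomial.aeval f p) x = -(p.natDegree : ℤ) * f.denom.rootMultiplicity x := by
  have hnum : f.num.eval x ≠ 0 := num_eval_ne_of_denom_eval_eq f x hd
  rw [ordC_rep (bal_ne_zero hf hp) (pow_ne_zero _ f.denom_ne_zero) (aeval_rep hf p) x]
  rw [Polynomial.rootMultiplicity_eq_zero (p := bal f p) (x := x)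
    (by
      rw [Polynomial.IsRoot, bal_eval_pole hd]
      exact mul_ne_zero (Polynomial.leadingCoeff_ne_zero.mpr hp) (pow_ne_zero _ hnum))]
  rw [rootMultiplicity_pow' f.denom_ne_zero]
  push_cast
  ring

end PfAux

namespace PfAux
open ParallelTensor

/-! ### local structure at a finite non-pole -/

section Master

variable {u : RF} (hu : NC u) {x : ℂ}

/-- the local "numerator" of `u - u(x)` at a non-pole. -/
def locA (u : RF) (x : ℂ) : ℂ[X] :=
  u.num - Polynomial.C (u.num.eval x / u.denom.eval x) * u.denom

lemma locA_ne (hu : NC u) (x : ℂ) : locA u x ≠ 0 := by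
  intro h
  set vv : ℂ := u.num.eval x / u.denom.eval x with hvv
  have h2 : u.num = Polynomial.C vv * u.denom := by
    have : u.num - Polynomial.C vv * u.denom = 0 := h
    linear_combination this
  apply hu vv
  conv_lhs => rw [← RatFunc.num_div_denom u, h2]
  rw [map_mul, RatFunc.algebraMap_C, mul_div_assoc, div_self (am_ne u.denom_ne_zero), mul_one]

lemma sub_C_rep (u : RF) (x : ℂ) :
    u - RatFunc.C (u.num.eval x / u.denom.eval x) = am (locA u x) / am u.denom := by
  unfold locA
  simp only [map_sub, map_mul, RatFunc.algebraMap_C]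
  rw [sub_div, mul_div_assoc, div_self (am_ne u.denom_ne_zero), mul_one, RatFunc.num_div_denom]

lemma locA_eval (hd : u.denom.eval x ≠ 0) : (locA u x).eval x = 0 := by
  unfold locA
  simp only [Polynomial.eval_sub, Polynomial.eval_mul, Polynomial.eval_C]
  field_simp
  ring

lemma ordC_sub_C (hu : NC u) (hd : u.denom.eval x ≠ 0) :
    ordC (u - RatFunc.C (u.num.eval x / u.denom.eval x)) x =
      ((locA u x).rootMultiplicity x : ℤ) := by
  rw [ordC_rep (locA_ne hu x) u.denom_ne_zero (sub_C_rep u x) x,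
    Polynomial.rootMultiplicity_eq_zero hd]
  simp

lemma locDegC_eq_rm (hu : NC u) (hd : u.denom.eval x ≠ 0) :
    locDegC u x = (locA u x).rootMultiplicity x := by
  rw [locDegC, if_neg hd, ordC_sub_C hu hd]
  simp

lemma locDegC_pos_nopole (hu : NC u) (hd : u.denom.eval x ≠ 0) : 1 ≤ locDegC u x := by
  rw [locDegC_eq_rm hu hd]
  exact (Polynomial.rootMultiplicity_pos (locA_ne hu x)).2 (locA_eval hd)

lemma locDegC_pos (hu : NC u) (x : ℂ) : 1 ≤ locDegC u x := by
  by_cases hd : u.denom.eval x = 0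
  · rw [locDegC, if_pos hd]
    exact (Polynomial.rootMultiplicity_pos u.denom_ne_zero).2 hd
  · exact locDegC_pos_nopole hu hd

/-- local numerator of the derivative -/
def locN (u : RF) : ℂ[X] :=
  Polynomial.derivative u.num * u.denom - u.num * Polynomial.derivative u.denom

lemma deriv_eq_locN (u : RF) : deriv u = am (locN u) / am (u.denom ^ 2) := rfl

lemma locN_struct_nopole (hu : NC u) (hd : u.denom.eval x ≠ 0) :
    locN u ≠ 0 ∧ (locN u).rootMultiplicity x = locDegC u x - 1 := by
  obtain ⟨m', hm'⟩ : ∃ m', locDegC u x = m' + 1 :=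
    ⟨locDegC u x - 1, by have := locDegC_pos_nopole hu hd; omega⟩
  obtain ⟨w, hw, hwnd⟩ := (locA u x).exists_eq_pow_rootMultiplicity_mul_and_not_dvd
    (locA_ne hu x) x
  have hwx : w.eval x ≠ 0 := fun h => hwnd (Polynomial.dvd_iff_isRoot.2 h)
  have hrmA : (locA u x).rootMultiplicity x = m' + 1 := by
    rw [← locDegC_eq_rm hu hd]; exact hm'
  rw [hrmA] at hw
  set v : ℂ := u.num.eval x / u.denom.eval x with hv
  have hnum : u.num = Polynomial.C v * u.denom +
      (Polynomial.X - Polynomial.C x) ^ (m' + 1) * w := by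
    rw [← hw]; unfold locA; rw [← hv]; ring
  set G : ℂ[X] := Polynomial.C ((m' : ℂ) + 1) * w * u.denom +
    (Polynomial.X - Polynomial.C x) *
      (Polynomial.derivative w * u.denom - w * Polynomial.derivative u.denom) with hG
  have hNG : locN u = (Polynomial.X - Polynomial.C x) ^ m' * G := by
    rw [hG]; unfold locN
    rw [hnum]
    simp only [derivative_add, derivative_mul, derivative_pow, derivative_C,
      derivative_X_sub_C, Nat.add_sub_cancel]
    push_cast
    ring
  have hGx : G.eval x ≠ 0 := by
    rw [hG]
    simp only [Polynomial.eval_add, Polynomial.eval_mul, Polynomial.eval_C,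
      Polynomial.eval_sub, Polynomial.eval_X, sub_self, zero_mul, add_zero]
    have : ((m' : ℂ) + 1) ≠ 0 := by
      have := Nat.cast_add_one_ne_zero (R := ℂ) m'
      push_cast at this ⊢
      exact this
    exact mul_ne_zero (mul_ne_zero this hwx) hd
  have hG0 : G ≠ 0 := fun h => hGx (by rw [h]; simp)
  have hN0 : locN u ≠ 0 := by
    rw [hNG]
    exact mul_ne_zero (pow_ne_zero _ (Polynomial.X_sub_C_ne_zero x)) hG0
  refine ⟨hN0, ?_⟩
  rw [hNG, Polynomial.rootMultiplicity_mul
    (mul_ne_zero (pow_ne_zero _ (Polynomial.X_sub_C_ne_zero x)) hG0),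
    Polynomial.rootMultiplicity_X_sub_C_pow,
    Polynomial.rootMultiplicity_eq_zero (fun hr => hGx hr), add_zero, hm']
  omega

lemma locN_struct_pole (hu : NC u) (hd : u.denom.eval x = 0) :
    locN u ≠ 0 ∧ (locN u).rootMultiplicity x = locDegC u x - 1 := by
  have hnumx : u.num.eval x ≠ 0 := num_eval_ne_of_denom_eval_eq u x hd
  have hm : locDegC u x = u.denom.rootMultiplicity x := by rw [locDegC, if_pos hd]
  obtain ⟨m', hm'⟩ : ∃ m', u.denom.rootMultiplicity x = m' + 1 :=
    ⟨u.denom.rootMultiplicity x - 1, by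
      have := (Polynomial.rootMultiplicity_pos u.denom_ne_zero).2 hd; omega⟩
  obtain ⟨w, hw, hwnd⟩ := u.denom.exists_eq_pow_rootMultiplicity_mul_and_not_dvd
    u.denom_ne_zero x
  have hwx : w.eval x ≠ 0 := fun h => hwnd (Polynomial.dvd_iff_isRoot.2 h)
  rw [hm'] at hw
  set G : ℂ[X] := (Polynomial.X - Polynomial.C x) * (Polynomial.derivative u.num * w) -
    u.num * (Polynomial.C ((m' : ℂ) + 1) * w +
      (Polynomial.X - Polynomial.C x) * Polynomial.derivative w) with hG
  have hNG : locN u = (Polynomial.X - Polynomial.C x) ^ m' * G := by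
    rw [hG]; unfold locN
    rw [hw]
    simp only [derivative_mul, derivative_pow, derivative_X_sub_C, Nat.add_sub_cancel]
    push_cast
    ring
  have hGx : G.eval x ≠ 0 := by
    rw [hG]
    simp only [Polynomial.eval_add, Polynomial.eval_mul, Polynomial.eval_C,
      Polynomial.eval_sub, Polynomial.eval_X, sub_self, zero_mul, add_zero, zero_sub, zero_add]
    have hmc : ((m' : ℂ) + 1) ≠ 0 := by
      have := Nat.cast_add_one_ne_zero (R := ℂ) m'
      push_cast at this ⊢
      exact this
    simp only [neg_ne_zero]
    exact mul_ne_zero hnumx (mul_ne_zero hmc hwx)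
  have hG0 : G ≠ 0 := fun h => hGx (by rw [h]; simp)
  have hN0 : locN u ≠ 0 := by
    rw [hNG]
    exact mul_ne_zero (pow_ne_zero _ (Polynomial.X_sub_C_ne_zero x)) hG0
  refine ⟨hN0, ?_⟩
  rw [hNG, Polynomial.rootMultiplicity_mul
    (mul_ne_zero (pow_ne_zero _ (Polynomial.X_sub_C_ne_zero x)) hG0),
    Polynomial.rootMultiplicity_X_sub_C_pow,
    Polynomial.rootMultiplicity_eq_zero (fun hr => hGx hr), add_zero, hm, hm']
  omega

lemma locN_ne_zero (hu : NC u) : locN u ≠ 0 := by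
  obtain ⟨y, hy⟩ : ∃ y, u.denom.eval y ≠ 0 := by
    by_contra h
    push_neg at h
    exact u.denom_ne_zero (u.denom.eq_zero_of_infinite_isRoot
      (Set.infinite_univ.mono (fun y _ => h y)))
  exact (locN_struct_nopole hu hy).1

lemma deriv_ne_zero (hu : NC u) : deriv u ≠ 0 := by
  rw [deriv_eq_locN]
  exact div_ne_zero (am_ne (locN_ne_zero hu)) (am_ne (pow_ne_zero 2 u.denom_ne_zero))

lemma ordC_deriv_nopole (hu : NC u) (hd : u.denom.eval x ≠ 0) :
    ordC (deriv u) x = (locDegC u x : ℤ) - 1 := by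
  obtain ⟨hN0, hrm⟩ := locN_struct_nopole hu hd
  rw [ordC_rep hN0 (pow_ne_zero 2 u.denom_ne_zero) (deriv_eq_locN u) x, hrm]
  have hd2 : (u.denom ^ 2).rootMultiplicity x = 0 := by
    refine Polynomial.rootMultiplicity_eq_zero ?_
    simp only [Polynomial.IsRoot, Polynomial.eval_pow, pow_eq_zero_iff']
    exact fun h => hd h.1
  rw [hd2]
  have := locDegC_pos_nopole hu hd
  push_cast
  omega

lemma ordC_deriv_pole (hu : NC u) (hd : u.denom.eval x = 0) :
    ordC (deriv u) x = -((locDegC u x : ℤ) + 1) := by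
  obtain ⟨hN0, hrm⟩ := locN_struct_pole hu hd
  rw [ordC_rep hN0 (pow_ne_zero 2 u.denom_ne_zero) (deriv_eq_locN u) x, hrm]
  have hd2 : (u.denom ^ 2).rootMultiplicity x = 2 * u.denom.rootMultiplicity x :=
    rootMultiplicity_pow' u.denom_ne_zero 2 x
  rw [hd2]
  have hm : locDegC u x = u.denom.rootMultiplicity x := by rw [locDegC, if_pos hd]
  have hpos : 1 ≤ locDegC u x := locDegC_pos hu x
  rw [← hm]
  push_cast
  omega

lemma ordC_comp_nopole {g : RF} (hu : NC u) (hg : g ≠ 0) (hd : u.denom.eval x ≠ 0) :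
    ordC (comp g u) x = (locDegC u x : ℤ) * ordC g (u.num.eval x / u.denom.eval x) := by
  set v : ℂ := u.num.eval x / u.denom.eval x with hv
  have hsub : ordC (u - RatFunc.C v) x = (locDegC u x : ℤ) := by
    rw [hv, ordC_sub_C hu hd, ← locDegC_eq_rm hu hd]
  have hsubne : u - RatFunc.C v ≠ 0 := hu.sub_C_ne v
  have key : ∀ p : ℂ[X], p ≠ 0 →
      ordC (Polynomial.aeval u p) x = (p.rootMultiplicity v : ℤ) * locDegC u x := by
    intro p hp
    obtain ⟨w, hw, hwnd⟩ := p.exists_eq_pow_rootMultiplicity_mul_and_not_dvd hp v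
    have hwv : w.eval v ≠ 0 := fun h => hwnd (Polynomial.dvd_iff_isRoot.2 h)
    have hw0 : w ≠ 0 := fun h => hwv (by rw [h]; simp)
    have h1 : Polynomial.aeval u p = (u - RatFunc.C v) ^ (p.rootMultiplicity v) *
        Polynomial.aeval u w := by
      conv_lhs => rw [hw]
      rw [map_mul, map_pow, map_sub, Polynomial.aeval_X, Polynomial.aeval_C,
        RatFunc.algebraMap_eq_C]
    rw [h1, ordC_mul (pow_ne_zero _ hsubne) (aeval_ne_zero_of_NC hu hw0),
      ordC_pow hsubne, hsub, ordC_aeval_nopole hu hw0 hd (hv ▸ hwv)]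
    ring
  rw [comp_def, ordC_div (aeval_ne_zero_of_NC hu (RatFunc.num_ne_zero hg))
    (aeval_ne_zero_of_NC hu g.denom_ne_zero),
    key g.num (RatFunc.num_ne_zero hg), key g.denom g.denom_ne_zero]
  unfold ordC
  push_cast
  ring

lemma ordC_comp_pole {g : RF} (hu : NC u) (hg : g ≠ 0) (hd : u.denom.eval x = 0) :
    ordC (comp g u) x = -g.intDegree * (locDegC u x : ℤ) := by
  have hm : locDegC u x = u.denom.rootMultiplicity x := by rw [locDegC, if_pos hd]
  rw [comp_def, ordC_div (aeval_ne_zero_of_NC hu (RatFunc.num_ne_zero hg))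
    (aeval_ne_zero_of_NC hu g.denom_ne_zero),
    ordC_aeval_pole hu (RatFunc.num_ne_zero hg) hd,
    ordC_aeval_pole hu g.denom_ne_zero hd, RatFunc.intDegree, hm]
  push_cast
  ring

lemma pullback_ne_zero {g : RF} (hu : NC u) (hg : g ≠ 0) (k : ℕ) :
    pullback k u g ≠ 0 :=
  mul_ne_zero (comp_ne_zero hu hg) (pow_ne_zero _ (deriv_ne_zero hu))

lemma master {g : RF} (hu : NC u) (hg : g ≠ 0) (k : ℕ) (x : ℂ) :
    ordC (pullback k u g) x =
      (locDegC u x : ℤ) * (if u.denom.eval x = 0 then (-g.intDegree - 2 * k)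
        else ordC g (u.num.eval x / u.denom.eval x)) + k * ((locDegC u x : ℤ) - 1) := by
  rw [pullback, ordC_mul (comp_ne_zero hu hg) (pow_ne_zero _ (deriv_ne_zero hu)),
    ordC_pow (deriv_ne_zero hu)]
  by_cases hd : u.denom.eval x = 0
  · rw [if_pos hd, ordC_comp_pole hu hg hd, ordC_deriv_pole hu hd]
    ring
  · rw [if_neg hd, ordC_comp_nopole hu hg hd, ordC_deriv_nopole hu hd]

end Master

/-! ### the chart at infinity -/

section Infinity

/-- the coordinate change `w = 1/z` -/
noncomputable def sig : RF := (RatFunc.X)⁻¹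

lemma X_ne_zero' : (RatFunc.X : RF) ≠ 0 := RatFunc.X_ne_zero

lemma sig_ne_zero : sig ≠ 0 := inv_ne_zero X_ne_zero'

lemma sig_rep : sig = am 1 / am Polynomial.X := by
  unfold sig
  simp only [map_one]
  rw [one_div]
  exact congrArg Inv.inv RatFunc.algebraMap_X.symm

lemma NC_sig : NC sig := by
  intro c h
  have hc : c ≠ 0 := by
    intro h0
    rw [h0] at h
    exact sig_ne_zero (by rw [h]; simp)
  have h1 : (1 : RF) = RatFunc.C c * RatFunc.X := by
    rw [← h, sig, inv_mul_cancel₀ X_ne_zero']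
  have h2 := congrArg RatFunc.intDegree h1
  rw [RatFunc.intDegree_one, RatFunc.intDegree_mul (by simpa using hc) X_ne_zero',
    RatFunc.intDegree_C, RatFunc.intDegree_X] at h2
  omega

lemma comp_sig_sig : comp sig sig = RatFunc.X := by
  rw [comp_rep NC_sig Polynomial.X_ne_zero sig_rep, map_one, Polynomial.aeval_X, one_div]
  unfold sig
  rw [inv_inv]

lemma comp_comp_sig (f : RF) (hf : NC f) (g : RF) :
    comp (comp g f) sig = comp g (comp f sig) := comp_assoc hf NC_sig g

lemma NC_comp_sig {f : RF} (hf : NC f) : NC (comp f sig) := by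
  intro c h
  apply hf c
  have h2 : comp (comp f sig) sig = comp (RatFunc.C c) sig := by rw [h]
  rwa [comp_assoc NC_sig NC_sig, comp_sig_sig, comp_X, comp_C] at h2

lemma deriv_sig : deriv sig = am (-1) / am (Polynomial.X ^ 2) := by
  rw [deriv_rep Polynomial.X_ne_zero sig_rep]
  congr 2
  simp

lemma ordC_deriv_sig : ordC (deriv sig) 0 = -2 := by
  rw [ordC_rep (by norm_num : (-1 : ℂ[X]) ≠ 0) (pow_ne_zero 2 Polynomial.X_ne_zero)
    deriv_sig 0]
  have h1 : (-1 : ℂ[X]).rootMultiplicity 0 = 0 :=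
    Polynomial.rootMultiplicity_eq_zero (by simp [Polynomial.IsRoot])
  have h2 : (Polynomial.X ^ 2 : ℂ[X]).rootMultiplicity 0 = 2 := by
    have := Polynomial.rootMultiplicity_X_sub_C_pow (R := ℂ) 0 2
    simpa using this
  rw [h1, h2]
  simp

lemma aeval_sig (p : ℂ[X]) :
    Polynomial.aeval sig p = am p.reverse / am (Polynomial.X ^ p.natDegree) := by
  have hinv : Invertible (sig : RF) := invertibleOfNonzero sig_ne_zero
  have key := Polynomial.eval₂_reflect_mul_pow (algebraMap ℂ RF) sig p.natDegree p le_rfl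
  have hinvsig : (⅟ (sig : RF)) = RatFunc.X := by
    rw [invOf_eq_inv]
    unfold sig
    rw [inv_inv]
  rw [hinvsig] at key
  have hX : ∀ q : ℂ[X], Polynomial.eval₂ (algebraMap ℂ RF) RatFunc.X q = am q := by
    intro q
    rw [← Polynomial.aeval_def, aeval_X_eq]
  rw [hX] at key
  have : Polynomial.aeval sig p = Polynomial.eval₂ (algebraMap ℂ RF) sig p :=
    Polynomial.aeval_def _ _
  rw [this, ← key, Polynomial.reverse, div_eq_mul_inv]
  congr 1
  simp only [map_pow]
  unfold sig
  rw [inv_pow]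
  exact congrArg Inv.inv (congrArg (· ^ p.natDegree) RatFunc.algebraMap_X.symm)

end Infinity

/-! ### phi = f(1/w) -/

section Phi

def phi (f : RF) : RF := comp f sig

lemma am_X_pow (n : ℕ) : am ((Polynomial.X : ℂ[X]) ^ n) = RatFunc.X ^ n := by
  simp only [map_pow]
  exact congrArg (· ^ n) RatFunc.algebraMap_X

lemma phi_rep (f : RF) : phi f =
    am (f.num.reverse * Polynomial.X ^ f.denom.natDegree) /
      am (f.denom.reverse * Polynomial.X ^ f.num.natDegree) := by
  rw [phi, comp_def, aeval_sig, aeval_sig]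
  have h1 : am (f.denom.reverse) ≠ 0 :=
    am_ne (by rw [Ne, Polynomial.reverse_eq_zero]; exact f.denom_ne_zero)
  have h2 : (RatFunc.X : RF) ^ f.num.natDegree ≠ 0 := pow_ne_zero _ X_ne_zero'
  have h3 : (RatFunc.X : RF) ^ f.denom.natDegree ≠ 0 := pow_ne_zero _ X_ne_zero'
  simp only [map_mul, am_X_pow]
  field_simp
  try ring
  try tauto

lemma rm_X_pow_zero (n : ℕ) : ((Polynomial.X : ℂ[X]) ^ n).rootMultiplicity 0 = n := by
  have := Polynomial.rootMultiplicity_X_sub_C_pow (R := ℂ) 0 n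
  simpa using this

lemma rm_reverse_zero {p : ℂ[X]} (hp : p ≠ 0) : p.reverse.rootMultiplicity 0 = 0 := by
  refine Polynomial.rootMultiplicity_eq_zero ?_
  rw [Polynomial.IsRoot, ← Polynomial.coeff_zero_eq_eval_zero, Polynomial.coeff_zero_reverse]
  exact Polynomial.leadingCoeff_ne_zero.mpr hp

lemma ordC_comp_sig' {h : RF} (hh : h ≠ 0) : ordC (comp h sig) 0 = -h.intDegree := by
  have hnum : h.num ≠ 0 := RatFunc.num_ne_zero hh
  have hp : h.num.reverse * Polynomial.X ^ h.denom.natDegree ≠ 0 :=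
    mul_ne_zero (by rwa [Ne, Polynomial.reverse_eq_zero]) (pow_ne_zero _ Polynomial.X_ne_zero)
  have hq : h.denom.reverse * Polynomial.X ^ h.num.natDegree ≠ 0 :=
    mul_ne_zero (by rw [Ne, Polynomial.reverse_eq_zero]; exact h.denom_ne_zero)
      (pow_ne_zero _ Polynomial.X_ne_zero)
  rw [show comp h sig = phi h from rfl, ordC_rep hp hq (phi_rep h) 0,
    Polynomial.rootMultiplicity_mul hp, Polynomial.rootMultiplicity_mul hq,
    rm_reverse_zero hnum, rm_reverse_zero h.denom_ne_zero, rm_X_pow_zero, rm_X_pow_zero,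
    RatFunc.intDegree]
  push_cast
  ring

lemma ordDiff_infty_eq (k : ℕ) {h : RF} (hh : h ≠ 0) :
    -h.intDegree - 2 * (k : ℤ) = ordC (pullback k sig h) 0 := by
  rw [pullback, ordC_mul (comp_ne_zero NC_sig hh) (pow_ne_zero _ (deriv_ne_zero NC_sig)),
    ordC_pow (deriv_ne_zero NC_sig), ordC_comp_sig' hh, ordC_deriv_sig]
  ring

lemma pullback_sig {f : RF} (hf : NC f) (g : RF) (k : ℕ) :
    pullback k sig (pullback k f g) = pullback k (phi f) g := by
  rw [pullback, pullback, pullback, comp_mul NC_sig, comp_pow NC_sig, comp_comp_sig f hf]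
  have hch : deriv (comp f sig) = comp (deriv f) sig * deriv sig := deriv_comp NC_sig f
  rw [show phi f = comp f sig from rfl, hch, mul_pow]
  ring

lemma phi_denom_zero_iff {f : RF} (hf : NC f) :
    ((phi f).denom.eval 0 = 0) ↔ 0 < f.intDegree := by
  rw [denom_eval_zero_iff (g := phi f) (comp_ne_zero NC_sig hf.ne_zero) 0]
  have h : ordC (phi f) 0 = -f.intDegree := ordC_comp_sig' hf.ne_zero
  rw [h]
  omega

lemma phi_val_neg {f : RF} (hf : NC f) (h : f.intDegree < 0) :
    (phi f).num.eval 0 / (phi f).denom.eval 0 = 0 := by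
  have hab : f.num.natDegree < f.denom.natDegree := by
    unfold RatFunc.intDegree at h
    omega
  have hsplit : (Polynomial.X : ℂ[X]) ^ f.denom.natDegree =
      Polynomial.X ^ (f.denom.natDegree - f.num.natDegree) * Polynomial.X ^ f.num.natDegree := by
    rw [← pow_add]; congr 1; omega
  have hg : phi f = am (f.num.reverse * Polynomial.X ^ (f.denom.natDegree - f.num.natDegree)) /
      am (f.denom.reverse) := by
    rw [phi_rep, hsplit]
    simp only [map_mul, am_X_pow]
    have h2 : (RatFunc.X : RF) ^ f.num.natDegree ≠ 0 := pow_ne_zero _ X_ne_zero'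
    have h1 : am (f.denom.reverse) ≠ 0 :=
      am_ne (by rw [Ne, Polynomial.reverse_eq_zero]; exact f.denom_ne_zero)
    field_simp
  have hq0 : (f.denom.reverse).eval 0 ≠ 0 := by
    rw [← Polynomial.coeff_zero_eq_eval_zero, Polynomial.coeff_zero_reverse]
    exact Polynomial.leadingCoeff_ne_zero.mpr f.denom_ne_zero
  have := (eval_rep hq0 hg).2
  rw [this]
  rw [Polynomial.eval_mul, Polynomial.eval_pow, Polynomial.eval_X,
    zero_pow (by omega : f.denom.natDegree - f.num.natDegree ≠ 0)]
  simp

lemma phi_val_of_intDegree_eq {f : RF} (hf : NC f) (h : f.intDegree = 0) :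
    (phi f).num.eval 0 / (phi f).denom.eval 0 =
      f.num.leadingCoeff / f.denom.leadingCoeff := by
  have hab : f.num.natDegree = f.denom.natDegree := by
    unfold RatFunc.intDegree at h
    omega
  have hg : phi f = am (f.num.reverse) / am (f.denom.reverse) := by
    rw [phi_rep, hab]
    simp only [map_mul, am_X_pow]
    have h2 : (RatFunc.X : RF) ^ f.denom.natDegree ≠ 0 := pow_ne_zero _ X_ne_zero'
    have h1 : am (f.denom.reverse) ≠ 0 :=
      am_ne (by rw [Ne, Polynomial.reverse_eq_zero]; exact f.denom_ne_zero)
    field_simp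
  have hq0 : (f.denom.reverse).eval 0 ≠ 0 := by
    rw [← Polynomial.coeff_zero_eq_eval_zero, Polynomial.coeff_zero_reverse]
    exact Polynomial.leadingCoeff_ne_zero.mpr f.denom_ne_zero
  have := (eval_rep hq0 hg).2
  rw [this, ← Polynomial.coeff_zero_eq_eval_zero, ← Polynomial.coeff_zero_eq_eval_zero,
    Polynomial.coeff_zero_reverse, Polynomial.coeff_zero_reverse]

end Phi

/-! ### the main local identity on the sphere -/

lemma locDeg_pos {f : RF} (hf : NC f) (x : P1) : 1 ≤ locDeg f x := by
  cases x with
  | none => exact locDegC_pos (NC_comp_sig hf) 0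
  | some z => exact locDegC_pos hf z

lemma main_identity {f g : RF} (hf : NC f) (hg : g ≠ 0) (k : ℕ) (x : P1) :
    ordDiff k (pullback k f g) x =
      (locDeg f x : ℤ) * ordDiff k g (evalP1 f x) + k * ((locDeg f x : ℤ) - 1) := by
  cases x with
  | some z =>
    have h1 : ordDiff k (pullback k f g) (Option.some z) = ordC (pullback k f g) z := rfl
    have h2 : (locDeg f (Option.some z) : ℤ) = (locDegC f z : ℤ) := rfl
    rw [h1, h2, master hf hg k z]
    by_cases hd : f.denom.eval z = 0
    · rw [if_pos hd]
      have h3 : evalP1 f (Option.some z) = (∞ : P1) := by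
        show (if f.denom.eval z = 0 then (∞ : P1) else _) = _
        rw [if_pos hd]
      rw [h3]
      rfl
    · rw [if_neg hd]
      have h3 : evalP1 f (Option.some z) = ((f.num.eval z / f.denom.eval z : ℂ) : P1) := by
        show (if f.denom.eval z = 0 then (∞ : P1) else _) = _
        rw [if_neg hd]
      rw [h3]
      rfl
  | none =>
    have hLHS : ordDiff k (pullback k f g) none =
        -(pullback k f g).intDegree - 2 * k := rfl
    rw [hLHS, ordDiff_infty_eq k (pullback_ne_zero hf hg k), pullback_sig hf g k]
    have hmaster := master (u := phi f) (NC_comp_sig hf : NC (phi f)) hg k 0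
    rw [hmaster]
    have hloc : (locDeg f none : ℤ) = (locDegC (phi f) 0 : ℤ) := rfl
    rw [← hloc]
    congr 2
    rcases lt_trichotomy f.intDegree 0 with hlt | heq0 | hgt
    · rw [if_neg (by rw [phi_denom_zero_iff hf]; omega)]
      have hval : evalP1 f none = ((0 : ℂ) : P1) := by
        show (if 0 < f.intDegree then (∞ : P1) else if f.intDegree < 0 then _ else _) = _
        rw [if_neg (by omega), if_pos hlt]
      rw [hval, phi_val_neg hf hlt]
      rfl
    · rw [if_neg (by rw [phi_denom_zero_iff hf]; omega)]
      have hval : evalP1 f none = ((f.num.leadingCoeff / f.denom.leadingCoeff : ℂ) : P1) := by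
        show (if 0 < f.intDegree then (∞ : P1) else if f.intDegree < 0 then _ else _) = _
        rw [if_neg (by omega), if_neg (by omega)]
      rw [hval, phi_val_of_intDegree_eq hf heq0]
      rfl
    · rw [if_pos ((phi_denom_zero_iff hf).mpr hgt)]
      have hval : evalP1 f none = (∞ : P1) := by
        show (if 0 < f.intDegree then (∞ : P1) else _) = _
        rw [if_pos hgt]
      rw [hval]
      rfl

/-! ### finiteness of support and ramification -/

lemma NC_of_degRat {f : RF} (hdeg : 2 ≤ degRat f) : NC f := by
  intro c h
  rw [h] at hdeg
  unfold degRat at hdeg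
  rw [RatFunc.num_C, RatFunc.denom_C, Polynomial.natDegree_C, Polynomial.natDegree_one] at hdeg
  omega

lemma supp_finite {g : RF} (hg : g ≠ 0) (k : ℕ) :
    {x : P1 | ordDiff k g x ≠ 0}.Finite := by
  have hnd : g.num * g.denom ≠ 0 := mul_ne_zero (RatFunc.num_ne_zero hg) g.denom_ne_zero
  have hfin : {z : ℂ | (g.num * g.denom).IsRoot z}.Finite :=
    Polynomial.finite_setOf_isRoot hnd
  refine Set.Finite.subset ((hfin.image (fun z : ℂ => (Option.some z : P1))).insert
    (∞ : P1)) ?_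
  intro x hx
  obtain - | z := x
  · exact Set.mem_insert _ _
  · refine Set.mem_insert_iff.mpr (Or.inr ⟨z, ?_, rfl⟩)
    have hz : ordC g z ≠ 0 := hx
    simp only [Set.mem_setOf_eq, Polynomial.IsRoot, Polynomial.eval_mul]
    by_contra hroot
    rcases mul_ne_zero_iff.mp hroot with ⟨h1, h2⟩
    exact hz (ordC_eq_zero_of_evals h2 h1)

lemma Ram_finite {f : RF} (hf : NC f) : (Ram f).Finite := by
  have hfin : ({z : ℂ | f.denom.IsRoot z} ∪ {z : ℂ | (locN f).IsRoot z}).Finite :=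
    (Polynomial.finite_setOf_isRoot f.denom_ne_zero).union
      (Polynomial.finite_setOf_isRoot (locN_ne_zero hf))
  refine Set.Finite.subset ((hfin.image (fun z : ℂ => (Option.some z : P1))).insert
    (∞ : P1)) ?_
  intro x hx
  obtain - | z := x
  · exact Set.mem_insert _ _
  · refine Set.mem_insert_iff.mpr (Or.inr ⟨z, ?_, rfl⟩)
    have hz : 2 ≤ locDegC f z := hx
    by_cases hd : f.denom.eval z = 0
    · exact Or.inl hd
    · right
      obtain ⟨hN0, hrm⟩ := locN_struct_nopole hf hd
      have : 0 < (locN f).rootMultiplicity z := by omega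
      exact ((Polynomial.rootMultiplicity_pos hN0).mp this)

/-! ### surjectivity -/


lemma degRat_cases {f : RF} (hdeg : 2 ≤ degRat f) :
    2 ≤ f.num.natDegree ∨ 2 ≤ f.denom.natDegree := by
  unfold degRat at hdeg
  exact le_max_iff.mp hdeg

lemma evalP1_none (f : RF) : evalP1 f none =
    (if 0 < f.intDegree then (∞ : P1)
     else if f.intDegree < 0 then ((0 : ℂ) : P1)
     else ((f.num.leadingCoeff / f.denom.leadingCoeff : ℂ) : P1)) := rfl

lemma evalP1_some (f : RF) (z : ℂ) : evalP1 f (Option.some z) =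
    (if f.denom.eval z = 0 then (∞ : P1)
     else ((f.num.eval z / f.denom.eval z : ℂ) : P1)) := rfl

lemma evalP1_surjective {f : RF} (hf : NC f) (hdeg : 2 ≤ degRat f) :
    Function.Surjective (evalP1 f) := by
  intro y
  have hcases := degRat_cases hdeg
  obtain - | w := y
  · -- target is ∞
    by_cases hroot : ∃ z, f.denom.eval z = 0
    · obtain ⟨z, hz⟩ := hroot
      exact ⟨Option.some z, by rw [evalP1_some, if_pos hz]; rfl⟩
    · push_neg at hroot
      have hb : f.denom.natDegree = 0 := by
        by_contra hcon
        obtain ⟨z, hz⟩ := Complex.exists_root (f := f.denom)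
          (Polynomial.natDegree_pos_iff_degree_pos.mp (by omega))
        exact hroot z hz
      have ha : 0 < f.intDegree := by
        unfold RatFunc.intDegree
        omega
      exact ⟨none, by rw [evalP1_none, if_pos ha]; rfl⟩
  · -- target is a finite value w
    set h : ℂ[X] := f.num - Polynomial.C w * f.denom with hh
    by_cases hzero : h = 0
    · exfalso
      apply hf w
      have h2 : f.num = Polynomial.C w * f.denom := by
        have h3 : f.num - Polynomial.C w * f.denom = 0 := hzero
        linear_combination h3
      conv_lhs => rw [← RatFunc.num_div_denom f, h2]
      rw [map_mul, RatFunc.algebraMap_C, mul_div_assoc, div_self (am_ne f.denom_ne_zero),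
        mul_one]
    by_cases hdegh : 0 < h.degree
    · obtain ⟨z, hz⟩ := Complex.exists_root hdegh
      have hzeval : f.num.eval z - w * f.denom.eval z = 0 := by
        have h4 := hz
        rw [Polynomial.IsRoot, hh] at h4
        simpa using h4
      have hdz : f.denom.eval z ≠ 0 := by
        intro hd0
        have hnz : f.num.eval z = 0 := by rw [hd0] at hzeval; simpa using hzeval
        exact num_denom_not_both_zero f z hnz hd0
      refine ⟨Option.some z, ?_⟩
      rw [evalP1_some, if_neg hdz]
      show (((f.num.eval z / f.denom.eval z : ℂ)) : P1) = ((w : ℂ) : P1)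
      congr 1
      field_simp
      linear_combination hzeval
    · have hdeg0 : h.natDegree = 0 :=
        Polynomial.natDegree_eq_zero_iff_degree_le_zero.mpr (le_of_not_gt hdegh)
      by_cases hw0 : w = 0
      · have hnumdeg : f.num.natDegree = 0 := by
          rw [hh, hw0] at hdeg0
          simpa using hdeg0
        have hid : f.intDegree < 0 := by
          unfold RatFunc.intDegree
          omega
        refine ⟨none, ?_⟩
        rw [evalP1_none, if_neg (by omega), if_pos hid, hw0]
        rfl
      · have hab : f.num.natDegree = f.denom.natDegree := by
          by_contra hne
          rcases Nat.lt_or_ge f.num.natDegree f.denom.natDegree with hlt | hge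
          · have hco : h.coeff f.denom.natDegree ≠ 0 := by
              rw [hh, Polynomial.coeff_sub, Polynomial.coeff_C_mul,
                Polynomial.coeff_eq_zero_of_natDegree_lt hlt, zero_sub, neg_ne_zero]
              exact mul_ne_zero hw0 (Polynomial.leadingCoeff_ne_zero.mpr f.denom_ne_zero)
            have hle := Polynomial.le_natDegree_of_ne_zero hco
            omega
          · have hgt : f.denom.natDegree < f.num.natDegree := by omega
            have hco : h.coeff f.num.natDegree ≠ 0 := by
              rw [hh, Polynomial.coeff_sub, Polynomial.coeff_C_mul,
                Polynomial.coeff_eq_zero_of_natDegree_lt hgt, mul_zero, sub_zero]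
              exact Polynomial.leadingCoeff_ne_zero.mpr (RatFunc.num_ne_zero hf.ne_zero)
            have hle := Polynomial.le_natDegree_of_ne_zero hco
            omega
        have ha2 : 1 ≤ f.num.natDegree := by omega
        have hco : h.coeff f.num.natDegree = 0 :=
          Polynomial.coeff_eq_zero_of_natDegree_lt (by omega)
        rw [hh, Polynomial.coeff_sub, Polynomial.coeff_C_mul] at hco
        have hlead : f.num.leadingCoeff = w * f.denom.leadingCoeff := by
          unfold Polynomial.leadingCoeff
          rw [hab] at hco ⊢
          linear_combination hco
        have hid : f.intDegree = 0 := by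
          unfold RatFunc.intDegree
          omega
        refine ⟨none, ?_⟩
        rw [evalP1_none, if_neg (by omega), if_neg (by omega)]
        show ((f.num.leadingCoeff / f.denom.leadingCoeff : ℂ) : P1) = ((w : ℂ) : P1)
        congr 1
        rw [hlead, mul_div_assoc,
          div_self (Polynomial.leadingCoeff_ne_zero.mpr f.denom_ne_zero), mul_one]

/-! ### dynamics -/

lemma iterate_range_finite_of_not_inj {F : P1 → P1} {c : P1}
    (h : ¬ Function.Injective (fun n : ℕ => F^[n] c)) :
    (Set.range fun n : ℕ => F^[n] c).Finite := by
  rw [Function.Injective] at h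
  push_neg at h
  obtain ⟨a, b, hab, hne⟩ := h
  wlog hlt : a < b generalizing a b
  · exact this b a hab.symm (Ne.symm hne) (by omega)
  have key : ∀ n, ∃ m, m < b ∧ F^[n] c = F^[m] c := by
    intro n
    induction n using Nat.strong_induction_on with
    | _ n ih =>
      by_cases hn : n < b
      · exact ⟨n, hn, rfl⟩
      · have h1 : F^[n] c = F^[n - b + a] c := by
          have h2 : n = (n - b) + b := by omega
          conv_lhs => rw [h2]
          rw [Function.iterate_add_apply, ← hab, ← Function.iterate_add_apply]
        obtain ⟨m, hm, hmeq⟩ := ih (n - b + a) (by omega)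
        exact ⟨m, hm, h1.trans hmeq⟩
  refine Set.Finite.subset ((Set.finite_Iio b).image fun m => F^[m] c) ?_
  rintro - ⟨n, rfl⟩
  obtain ⟨m, hm, hmeq⟩ := key n
  exact ⟨m, hm, hmeq.symm⟩

lemma orbit_finite_core {F : P1 → P1} {ν : P1 → ℤ} {kk : ℤ}
    (hsur : Function.Surjective F) (hk : 1 ≤ kk)
    (hsupp : {x : P1 | ν x ≠ kk}.Finite)
    (hrel : ∀ x, ∃ m : ℕ, 1 ≤ m ∧ ν x = m * ν (F x))
    {c : P1} (hc : ∃ m : ℕ, 2 ≤ m ∧ ν c = m * ν (F c)) :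
    (Set.range fun n : ℕ => F^[n] c).Finite := by
  by_contra hinf
  have hinj : Function.Injective fun n : ℕ => F^[n] c := by
    by_contra hni
    exact hinf (iterate_range_finite_of_not_inj hni)
  have hSinv : ∀ x, ν x ≤ 0 → ν (F x) ≤ 0 := by
    intro x hx
    by_contra hpos
    push_neg at hpos
    obtain ⟨m, hm1, hmeq⟩ := hrel x
    have : (1 : ℤ) ≤ m := by exact_mod_cast hm1
    nlinarith
  by_cases hA : ∃ N, ν (F^[N] c) ≤ 0
  · obtain ⟨N, hN⟩ := hA
    have hall : ∀ p, ν (F^[N + p] c) ≤ 0 := by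
      intro p
      induction p with
      | zero => simpa using hN
      | succ p ih =>
        have : N + (p + 1) = (N + p) + 1 := by omega
        rw [this, Function.iterate_succ_apply']
        exact hSinv _ ih
    have hSfin : {x : P1 | ν x ≤ 0}.Finite :=
      hsupp.subset (fun x hx => by simp only [Set.mem_setOf_eq] at *; omega)
    have hinj2 : Function.Injective fun p : ℕ => F^[N + p] c := by
      intro p q hpq
      have := hinj hpq
      omega
    exact (Set.infinite_range_of_injective hinj2)
      (hSfin.subset (by rintro - ⟨p, rfl⟩; exact hall p))
  · push_neg at hA
    have hA1 : ∀ n, 1 ≤ ν (F^[n] c) := fun n => by have := hA n; omega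
    have hmono : ∀ n, ν (F^[n + 1] c) ≤ ν (F^[n] c) := by
      intro n
      obtain ⟨m, hm1, hmeq⟩ := hrel (F^[n] c)
      have h1 : (1 : ℤ) ≤ m := by exact_mod_cast hm1
      have h2 : ν (F^[n + 1] c) = ν (F (F^[n] c)) := by
        rw [Function.iterate_succ_apply']
      have h3 : 1 ≤ ν (F (F^[n] c)) := h2 ▸ hA1 (n + 1)
      rw [h2]
      nlinarith
    have hanti : ∀ n m, n ≤ m → ν (F^[m] c) ≤ ν (F^[n] c) := by
      intro n m hnm
      induction m with
      | zero =>
        have hn0 : n = 0 := by omega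
        rw [hn0]
      | succ m ih =>
        rcases Nat.lt_or_ge n (m + 1) with hlt | hge
        · have h1 := hmono m
          have h2 := ih (by omega)
          omega
        · have hn : n = m + 1 := by omega
          rw [hn]
    have hPfin : {n : ℕ | ν (F^[n] c) ≠ kk}.Finite := by
      have heq : {n : ℕ | ν (F^[n] c) ≠ kk} = (fun n : ℕ => F^[n] c) ⁻¹' {x | ν x ≠ kk} := rfl
      rw [heq]
      exact Set.Finite.preimage hinj.injOn hsupp
    have hcompl : {n : ℕ | ν (F^[n] c) ≠ kk}ᶜ.Infinite := hPfin.infinite_compl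
    have hak : ∀ n, kk ≤ ν (F^[n] c) := by
      intro n
      obtain ⟨n1, hn1mem, hn1⟩ := hcompl.exists_gt n
      have heq1 : ν (F^[n1] c) = kk := by simpa using hn1mem
      have h2 := hanti n n1 (by omega)
      omega
    obtain ⟨m0, hm02, hm0eq⟩ := hc
    have hFc : ν (F c) = ν (F^[1] c) := by rw [Function.iterate_one]
    have hc2 : 2 * kk ≤ ν c := by
      have h1 : kk ≤ ν (F^[1] c) := hak 1
      have h2 : (2 : ℤ) ≤ m0 := by exact_mod_cast hm02
      nlinarith [hm0eq, hFc]
    set B : Set P1 := {x | ∃ n : ℕ, F^[n] x = c} with hB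
    have hcB : c ∈ B := ⟨0, rfl⟩
    have hBle' : ∀ n (x : P1), F^[n] x = c → ν c ≤ ν x := by
      intro n
      induction n with
      | zero =>
        intro x hn
        simp only [Function.iterate_zero_apply] at hn
        rw [hn]
      | succ n ih =>
        intro x hn
        have hn' : F^[n] (F x) = c := by rw [← Function.iterate_succ_apply]; exact hn
        have hFx := ih (F x) hn'
        obtain ⟨m, hm1, hmeq⟩ := hrel x
        have h1 : (1 : ℤ) ≤ m := by exact_mod_cast hm1
        nlinarith [hk]
    have hBle : ∀ x ∈ B, ν c ≤ ν x := by
      intro x hx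
      obtain ⟨n, hn⟩ := hx
      exact hBle' n x hn
    have hBfin : B.Finite := by
      refine hsupp.subset ?_
      intro x hx
      have h1 := hBle x hx
      simp only [Set.mem_setOf_eq]
      omega
    have hBback : ∀ x, F x ∈ B → x ∈ B := by
      intro x hx
      obtain ⟨n, hn⟩ := hx
      exact ⟨n + 1, by rw [Function.iterate_succ_apply]; exact hn⟩
    set s : P1 → P1 := Function.surjInv hsur with hs
    have hsinj : Function.Injective s := Function.injective_surjInv hsur
    have hFs : ∀ y, F (s y) = y := fun y => Function.surjInv_eq hsur y
    have hsB : s '' B ⊆ B := by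
      rintro - ⟨x, hx, rfl⟩
      exact hBback (s x) (by rw [hFs]; exact hx)
    have himg : s '' B = B := by
      refine Set.eq_of_subset_of_ncard_le hsB ?_ hBfin
      rw [Set.ncard_image_of_injective B hsinj]
    have hfwd : ∀ x ∈ B, F x ∈ B := by
      intro x hx
      rw [← himg] at hx
      obtain ⟨y, hy, rfl⟩ := hx
      rw [hFs]
      exact hy
    have horb : ∀ n, F^[n] c ∈ B := by
      intro n
      induction n with
      | zero => exact hcB
      | succ n ih =>
        rw [Function.iterate_succ_apply']
        exact hfwd _ ih
    exact hinf (hBfin.subset (by rintro - ⟨n, rfl⟩; exact horb n))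

/-! ### conclusion -/

lemma postcrit_finite_main {f g : RF} {k : ℕ} (hk : 1 ≤ k) (hdeg : 2 ≤ degRat f)
    (hg : g ≠ 0) {lam : ℂ} (hlam : lam ≠ 0)
    (heq : pullback k f g = RatFunc.C lam * g) : (PostCrit f).Finite := by
  have hf : NC f := NC_of_degRat hdeg
  have hClam : (RatFunc.C lam : RF) ≠ 0 := by
    rw [← RatFunc.algebraMap_C]
    exact am_ne (Polynomial.C_ne_zero.mpr hlam)
  have hinv : ∀ x : P1, ordDiff k (pullback k f g) x = ordDiff k g x := by
    intro x
    rw [heq]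
    obtain - | z := x
    · show -(RatFunc.C lam * g).intDegree - 2 * (k : ℤ) = -(g.intDegree) - 2 * k
      rw [RatFunc.intDegree_mul hClam hg, RatFunc.intDegree_C]
      ring
    · show ordC (RatFunc.C lam * g) z = ordC g z
      rw [ordC_mul hClam hg, ordC_C hlam]
      ring
  set F := evalP1 f with hF
  set ν : P1 → ℤ := fun x => ordDiff k g x + k with hν
  have hrel' : ∀ x, ν x = (locDeg f x : ℤ) * ν (F x) := by
    intro x
    have h1 := main_identity hf hg k x
    rw [hinv x] at h1
    rw [hν]
    simp only
    linear_combination h1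
  have hrel : ∀ x, ∃ m : ℕ, 1 ≤ m ∧ ν x = m * ν (F x) :=
    fun x => ⟨locDeg f x, locDeg_pos hf x, hrel' x⟩
  have hsupp : {x : P1 | ν x ≠ (k : ℤ)}.Finite := by
    refine (supp_finite hg k).subset ?_
    intro x hx
    simp only [Set.mem_setOf_eq, hν] at *
    omega
  have hsur : Function.Surjective F := evalP1_surjective hf hdeg
  have hkk : (1 : ℤ) ≤ (k : ℤ) := by exact_mod_cast hk
  have horb : ∀ c ∈ Ram f, (Set.range fun n : ℕ => F^[n] c).Finite := by
    intro c hc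
    exact orbit_finite_core hsur hkk hsupp hrel ⟨locDeg f c, hc, hrel' c⟩
  have hsub : PostCrit f ⊆ ⋃ c ∈ Ram f, Set.range fun n : ℕ => F^[n] c := by
    intro y hy
    simp only [PostCrit, Set.mem_iUnion, Set.mem_image] at hy
    obtain ⟨n, hn1, c, hc, rfl⟩ := hy
    exact Set.mem_biUnion hc ⟨n, rfl⟩
  exact ((Ram_finite hf).biUnion horb).subset hsub

end PfAux

/-- If `f*q = λ·q` then `f` is postcritically finite: `⋃_{n ≥ 1} fⁿ(Ram_f)` is finite. -/
theorem stmt_6 (f g : RatFunc ℂ) (d k : ℕ) (lam : ℂ)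
    (hdeg : ParallelTensor.degRat f = d) (hd : 1 < d) (hk : 1 ≤ k)
    (hg : g ≠ 0) (hlam : lam ≠ 0)
    (heq : ParallelTensor.pullback k f g = RatFunc.C lam * g) :
    (ParallelTensor.PostCrit f).Finite := by
  exact PfAux.postcrit_finite_main hk (by omega) hg hlam heq

end
end
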